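/- arXiv:1304.0797 — 7 statements merged into one kernel-verified Lean document; each statement's English description precedes it below -/
import Mathlib

section
/- Let g be a probability density on ℝ with characteristic function θ(z)=∫_ℝ e^{izx}g(x)dx, and suppose that for some δ>0 and N∈[0,1) one has |θ(z)| ≤ N for all |z| ≥ δ, and that K := ∫_ℝ g(x)²dx < ∞. Then for every integer a ≥ 2 and every b > 0, ∫_{|z| ≥ δb} |θ(z/b)|^a dz ≤ 2π · b · N^{a−2} · K. -/
open MeasureTheory Real


section TailAux
open Complex


lemma gauss_cexp_int {ε : ℝ} (hε : 0 < ε) (u : ℝ) :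
    ∫ z : ℝ, Complex.exp (Complex.I * u * z) * Complex.exp (-(ε:ℂ) * (z:ℂ)^2)
      = ((Real.sqrt (π/ε) * Real.exp (-(u^2)/(4*ε)) : ℝ) : ℂ) := by
  have h := fourierIntegral_gaussian (b := (ε:ℂ)) (by simpa using hε) (u : ℂ)
  rw [h]
  have h1 : ((π:ℂ) / (ε:ℂ)) ^ (1/2 : ℂ) = ((Real.sqrt (π/ε) : ℝ) : ℂ) := by
    rw [Real.sqrt_eq_rpow, ← Complex.ofReal_div, Complex.ofReal_cpow (by positivity)]
    norm_num
  rw [h1]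
  rw [show (-(u:ℂ)^2 / (4 * (ε:ℂ))) = ((-(u^2)/(4*ε) : ℝ) : ℂ) by push_cast; ring]
  rw [← Complex.ofReal_exp, ← Complex.ofReal_mul]

lemma gauss_kernel_int {ε : ℝ} (hε : 0 < ε) :
    ∫ u : ℝ, Real.sqrt (π/ε) * Real.exp (-(u^2)/(4*ε)) = 2 * π := by
  have h : ∀ u : ℝ, -(u^2)/(4*ε) = -(1/(4*ε)) * u^2 := fun u => by field_simp
  simp_rw [h, integral_const_mul, integral_gaussian]
  rw [← Real.sqrt_mul (by positivity)]
  rw [show π / ε * (π / (1/(4*ε))) = (2*π)^2 by field_simp; ring]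
  exact Real.sqrt_sq (by positivity)

lemma gauss_kernel_integrable {ε : ℝ} (hε : 0 < ε) :
    Integrable (fun u : ℝ => Real.sqrt (π/ε) * Real.exp (-(u^2)/(4*ε))) := by
  have h : ∀ u : ℝ, -(u^2)/(4*ε) = -(1/(4*ε)) * u^2 := fun u => by field_simp
  simp_rw [h]
  exact (integrable_exp_neg_mul_sq (by positivity)).const_mul _

variable {g : ℝ → ℝ}

lemma core_identity (hm : Measurable g) (hg0 : ∀ x, 0 ≤ g x) (hgi : Integrable g)
    {ε : ℝ} (hε : 0 < ε) :
    ∫ z : ℝ, rexp (-ε * z^2) * (‖∫ x : ℝ, Complex.exp (Complex.I * z * x) * (g x : ℂ)‖)^2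
      = ∫ p : ℝ × ℝ, g p.1 * g p.2 * (Real.sqrt (π/ε) * rexp (-((p.1-p.2)^2)/(4*ε)))
          ∂(volume.prod volume) := by
  classical
  set θ : ℝ → ℂ := fun z => ∫ x : ℝ, Complex.exp (Complex.I * z * x) * (g x : ℂ) with hθ
  have hconj : ∀ z : ℝ, (starRingEnd ℂ) (θ z) = ∫ y : ℝ, Complex.exp (-(Complex.I * z * y)) * (g y : ℂ) := by
    intro z
    rw [hθ, ← integral_conj]
    refine integral_congr_ae (Filter.Eventually.of_forall fun y => ?_)
    simp only [map_mul, ← Complex.exp_conj, Complex.conj_ofReal, Complex.conj_I, neg_mul]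
  have hprod : ∀ z : ℝ, θ z * (starRingEnd ℂ) (θ z)
      = ∫ p : ℝ × ℝ, (Complex.exp (Complex.I * z * p.1) * (g p.1 : ℂ))
          * (Complex.exp (-(Complex.I * z * p.2)) * (g p.2 : ℂ)) ∂(volume.prod volume) := by
    intro z
    rw [hconj, hθ, ← integral_prod_mul]
  set F : ℝ → ℝ × ℝ → ℂ := fun z p =>
    Complex.exp (-(ε:ℂ) * (z:ℂ)^2) * ((Complex.exp (Complex.I * z * p.1) * (g p.1 : ℂ))
      * (Complex.exp (-(Complex.I * z * p.2)) * (g p.2 : ℂ))) with hF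
  have hFmeas : Measurable (Function.uncurry F) := by
    have h1 : Measurable fun q : ℝ × (ℝ × ℝ) => Complex.exp (-(ε:ℂ) * (q.1:ℂ)^2) :=
      Complex.measurable_exp.comp
        ((measurable_const.mul ((Complex.measurable_ofReal.comp measurable_fst).pow measurable_const)))
    have h2 : Measurable fun q : ℝ × (ℝ × ℝ) => Complex.exp (Complex.I * q.1 * q.2.1) :=
      Complex.measurable_exp.comp ((measurable_const.mul
        (Complex.measurable_ofReal.comp measurable_fst)).mul
        (Complex.measurable_ofReal.comp (measurable_fst.comp measurable_snd)))
    have h3 : Measurable fun q : ℝ × (ℝ × ℝ) => Complex.exp (-(Complex.I * q.1 * q.2.2)) :=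
      Complex.measurable_exp.comp (((measurable_const.mul
        (Complex.measurable_ofReal.comp measurable_fst)).mul
        (Complex.measurable_ofReal.comp (measurable_snd.comp measurable_snd))).neg)
    have h4 : Measurable fun q : ℝ × (ℝ × ℝ) => ((g q.2.1 : ℂ)) :=
      Complex.measurable_ofReal.comp (hm.comp (measurable_fst.comp measurable_snd))
    have h5 : Measurable fun q : ℝ × (ℝ × ℝ) => ((g q.2.2 : ℂ)) :=
      Complex.measurable_ofReal.comp (hm.comp (measurable_snd.comp measurable_snd))
    exact h1.mul ((h2.mul h4).mul (h3.mul h5))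
  have hnorm : ∀ q : ℝ × (ℝ × ℝ), ‖Function.uncurry F q‖
      = rexp (-ε * q.1^2) * (g q.2.1 * g q.2.2) := by
    rintro ⟨z, x, y⟩
    simp only [Function.uncurry, hF, norm_mul, Complex.norm_exp,
      Complex.norm_real, Real.norm_eq_abs]
    have h1 : (-(ε:ℂ) * (z:ℂ)^2).re = -ε * z^2 := by
      rw [show (-(ε:ℂ) * (z:ℂ)^2) = ((-ε * z^2 : ℝ) : ℂ) by push_cast; ring, Complex.ofReal_re]
    have h2 : (Complex.I * z * x).re = 0 := by simp
    have h3 : (-(Complex.I * z * y)).re = 0 := by simp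
    rw [h1, h2, h3, _root_.abs_of_nonneg (hg0 x), _root_.abs_of_nonneg (hg0 y)]
    simp only [Real.exp_zero]
    ring
  have hFint : Integrable (Function.uncurry F) (volume.prod (volume.prod volume)) := by
    refine Integrable.mono' (g := fun q => rexp (-ε * q.1^2) * (g q.2.1 * g q.2.2)) ?_
      hFmeas.aestronglyMeasurable (Filter.Eventually.of_forall fun q => le_of_eq (hnorm q))
    exact (integrable_exp_neg_mul_sq hε).mul_prod (hgi.mul_prod hgi)
  have lhs_eq : ((∫ z : ℝ, rexp (-ε * z^2) * (‖θ z‖)^2 : ℝ) : ℂ)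
      = ∫ z : ℝ, (∫ p : ℝ × ℝ, F z p ∂(volume.prod volume)) := by
    refine (integral_ofReal (𝕜 := ℂ)).symm.trans ?_
    refine integral_congr_ae (Filter.Eventually.of_forall fun z => ?_)
    dsimp only
    have step : ((rexp (-ε * z^2) * (‖θ z‖)^2 : ℝ) : ℂ)
        = Complex.exp (-(ε:ℂ) * (z:ℂ)^2) * (θ z * (starRingEnd ℂ) (θ z)) := by
      rw [Complex.mul_conj, Complex.normSq_eq_norm_sq,
        show (-(ε:ℂ) * (z:ℂ)^2) = ((-ε * z^2 : ℝ) : ℂ) by push_cast; ring,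
        ← Complex.ofReal_exp]
      push_cast
      ring
    refine step.trans ?_
    rw [hprod z, ← integral_const_mul]
  have hswap : (∫ z : ℝ, (∫ p : ℝ × ℝ, F z p ∂(volume.prod volume)))
      = ∫ p : ℝ × ℝ, (∫ z : ℝ, F z p) ∂(volume.prod volume) :=
    integral_integral_swap hFint
  have hinner : ∀ p : ℝ × ℝ, (∫ z : ℝ, F z p)
      = ((g p.1 * g p.2 * (Real.sqrt (π/ε) * rexp (-((p.1-p.2)^2)/(4*ε))) : ℝ) : ℂ) := by
    rintro ⟨x, y⟩
    have heq : ∀ z : ℝ, F z (x, y) = ((g x : ℂ) * (g y : ℂ))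
        * (Complex.exp (Complex.I * ((x - y : ℝ) : ℂ) * (z:ℂ)) * Complex.exp (-(ε:ℂ) * (z:ℂ)^2)) := by
      intro z
      rw [hF]
      simp only
      have e1 : Complex.exp (Complex.I * z * x) * Complex.exp (-(Complex.I * z * y))
          = Complex.exp (Complex.I * ((x - y : ℝ) : ℂ) * (z:ℂ)) := by
        rw [← Complex.exp_add]; congr 1; push_cast; ring
      rw [← e1]; ring
    simp_rw [heq, integral_const_mul, gauss_cexp_int hε (x - y)]
    push_cast
    ring
  have final : ((∫ z : ℝ, rexp (-ε * z^2) * (‖θ z‖)^2 : ℝ) : ℂ)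
      = ((∫ p : ℝ × ℝ, g p.1 * g p.2 * (Real.sqrt (π/ε) * rexp (-((p.1-p.2)^2)/(4*ε)))
          ∂(volume.prod volume) : ℝ) : ℂ) := by
    rw [lhs_eq, hswap]
    refine Eq.trans ?_ (integral_ofReal (𝕜 := ℂ))
    exact integral_congr_ae (Filter.Eventually.of_forall fun p => hinner p)
  exact_mod_cast final

lemma core_bound (hm : Measurable g) (hg0 : ∀ x, 0 ≤ g x)
    (hK : Integrable (fun x => g x ^ 2)) {ε : ℝ} (hε : 0 < ε) :
    ∫ p : ℝ × ℝ, g p.1 * g p.2 * (Real.sqrt (π/ε) * rexp (-((p.1-p.2)^2)/(4*ε)))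
        ∂(volume.prod volume) ≤ 2 * π * ∫ x, g x ^ 2 := by
  classical
  set Kf : ℝ → ℝ := fun u => Real.sqrt (π/ε) * rexp (-(u^2)/(4*ε)) with hKf
  have hKf0 : ∀ u, 0 ≤ Kf u := fun u => by positivity
  have hKfmeas : Measurable Kf := by
    apply Measurable.const_mul
    exact (Real.continuous_exp.comp (by continuity)).measurable
  set KK : ℝ := ∫ x, g x ^ 2 with hKK
  have hKK0 : 0 ≤ KK := integral_nonneg fun x => by positivity
  set f : ℝ × ℝ → ℝ := fun p => g p.1 * g p.2 * Kf (p.1 - p.2) with hf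
  have hfmeas : Measurable f :=
    ((hm.comp measurable_fst).mul (hm.comp measurable_snd)).mul
      (hKfmeas.comp (measurable_fst.sub measurable_snd))
  have hf0 : ∀ p, 0 ≤ f p := fun p => by
    have := hg0 p.1; have := hg0 p.2; have := hKf0 (p.1 - p.2); positivity
  rw [integral_eq_lintegral_of_nonneg_ae (Filter.Eventually.of_forall hf0)
    hfmeas.aestronglyMeasurable]
  refine ENNReal.toReal_le_of_le_ofReal (by positivity) ?_
  -- the two half functions
  set φ : ℝ × ℝ → ENNReal := fun q => ENNReal.ofReal (g q.1 ^ 2 / 2) * ENNReal.ofReal (Kf q.2)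
    with hφ
  have hφmeas : Measurable φ :=
    ((ENNReal.measurable_ofReal.comp ((hm.pow measurable_const).div_const 2)).comp
      measurable_fst).mul ((ENNReal.measurable_ofReal.comp hKfmeas).comp measurable_snd)
  set T : ℝ × ℝ → ℝ × ℝ := fun p => (p.1, p.1 - p.2) with hT
  set T' : ℝ × ℝ → ℝ × ℝ := fun p => (p.2, p.2 - p.1) with hT'
  have mpT : MeasurePreserving T ((volume : Measure ℝ).prod volume)
      ((volume : Measure ℝ).prod volume) := by
    have h1 := measurePreserving_prod_neg_add (volume : Measure ℝ) volume
    have h2 : MeasurePreserving (fun p : ℝ × ℝ => (p.1, -p.2))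
        ((volume : Measure ℝ).prod volume) ((volume : Measure ℝ).prod volume) :=
      (MeasurePreserving.id volume).prod (Measure.measurePreserving_neg volume)
    have hcomp := h2.comp h1
    have : ((fun p : ℝ × ℝ => (p.1, -p.2)) ∘ (fun z : ℝ × ℝ => (z.1, -z.1 + z.2))) = T := by
      funext p; simp [hT, Function.comp]; ring
    rwa [this] at hcomp
  have mpT' : MeasurePreserving T' ((volume : Measure ℝ).prod volume)
      ((volume : Measure ℝ).prod volume) := by
    have hcomp := mpT.comp (Measure.measurePreserving_swap
      (μ := (volume : Measure ℝ)) (ν := volume))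
    have : (T ∘ Prod.swap) = T' := by funext p; simp [hT, hT', Function.comp, Prod.swap]
    rwa [this] at hcomp
  -- pointwise bound
  have hpt : ∀ p : ℝ × ℝ, ENNReal.ofReal (f p) ≤ φ (T p) + φ (T' p) := by
    intro p
    have hKfsymm : Kf (p.2 - p.1) = Kf (p.1 - p.2) := by
      simp only [hKf]
      rw [show (p.2 - p.1)^2 = (p.1 - p.2)^2 by ring]
    have e1 : φ (T p) = ENNReal.ofReal (g p.1 ^ 2 / 2 * Kf (p.1 - p.2)) := by
      simp only [hφ, hT]
      rw [← ENNReal.ofReal_mul (by positivity)]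
    have e2 : φ (T' p) = ENNReal.ofReal (g p.2 ^ 2 / 2 * Kf (p.1 - p.2)) := by
      simp only [hφ, hT']
      rw [← ENNReal.ofReal_mul (by positivity), hKfsymm]
    rw [e1, e2, ← ENNReal.ofReal_add (by positivity) (by positivity)]
    apply ENNReal.ofReal_le_ofReal
    rw [hf]
    have hab : g p.1 * g p.2 ≤ g p.1 ^ 2 / 2 + g p.2 ^ 2 / 2 := by
      nlinarith [sq_nonneg (g p.1 - g p.2)]
    calc g p.1 * g p.2 * Kf (p.1 - p.2)
        ≤ (g p.1 ^ 2 / 2 + g p.2 ^ 2 / 2) * Kf (p.1 - p.2) :=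
          mul_le_mul_of_nonneg_right hab (hKf0 _)
      _ = g p.1 ^ 2 / 2 * Kf (p.1 - p.2) + g p.2 ^ 2 / 2 * Kf (p.1 - p.2) := by ring
  -- lintegral of φ
  have hφint : ∫⁻ q : ℝ × ℝ, φ q ∂((volume : Measure ℝ).prod volume)
      = ENNReal.ofReal (KK / 2) * ENNReal.ofReal (2 * π) := by
    have m1 : Measurable fun x : ℝ => ENNReal.ofReal (g x ^ 2 / 2) :=
      ENNReal.measurable_ofReal.comp ((hm.pow measurable_const).div_const 2)
    have m2 : Measurable fun u : ℝ => ENNReal.ofReal (Kf u) :=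
      ENNReal.measurable_ofReal.comp hKfmeas
    rw [hφ, lintegral_prod_mul (f := fun x : ℝ => ENNReal.ofReal (g x ^ 2 / 2))
      (g := fun u : ℝ => ENNReal.ofReal (Kf u)) m1.aemeasurable m2.aemeasurable]
    congr 1
    · rw [← ofReal_integral_eq_lintegral_ofReal (hK.div_const 2)
        (Filter.Eventually.of_forall fun x => by positivity)]
      rw [integral_div, hKK]
    · rw [← ofReal_integral_eq_lintegral_ofReal (gauss_kernel_integrable hε)
        (Filter.Eventually.of_forall fun u => by positivity)]
      rw [gauss_kernel_int hε]
  calc ∫⁻ p : ℝ × ℝ, ENNReal.ofReal (f p) ∂((volume : Measure ℝ).prod volume)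
      ≤ ∫⁻ p : ℝ × ℝ, (φ (T p) + φ (T' p)) ∂((volume : Measure ℝ).prod volume) :=
        lintegral_mono hpt
    _ = (∫⁻ p, φ (T p) ∂((volume : Measure ℝ).prod volume))
        + ∫⁻ p, φ (T' p) ∂((volume : Measure ℝ).prod volume) :=
        lintegral_add_left (hφmeas.comp mpT.measurable) _
    _ = ENNReal.ofReal (KK / 2) * ENNReal.ofReal (2 * π)
        + ENNReal.ofReal (KK / 2) * ENNReal.ofReal (2 * π) := by
        rw [mpT.lintegral_comp hφmeas, mpT'.lintegral_comp hφmeas, hφint]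
    _ ≤ ENNReal.ofReal (2 * π * KK) := by
        rw [← ENNReal.ofReal_mul (by positivity), ← ENNReal.ofReal_add (by positivity)
          (by positivity)]
        apply ENNReal.ofReal_le_ofReal
        nlinarith [Real.pi_pos, hKK0]

lemma theta_abs_le_one (hg0 : ∀ x, 0 ≤ g x) (hgi : Integrable g) (hg1 : ∫ x, g x = 1)
    (z : ℝ) : ‖∫ x : ℝ, Complex.exp (Complex.I * z * x) * (g x : ℂ)‖ ≤ 1 := by
  calc ‖∫ x : ℝ, Complex.exp (Complex.I * z * x) * (g x : ℂ)‖
      ≤ ∫ x : ℝ, ‖Complex.exp (Complex.I * z * x) * (g x : ℂ)‖ :=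
        norm_integral_le_integral_norm _
    _ = ∫ x : ℝ, g x := by
        refine integral_congr_ae (Filter.Eventually.of_forall fun x => ?_)
        dsimp only
        rw [norm_mul, Complex.norm_exp,
          Complex.norm_real, Real.norm_eq_abs]
        have h2 : (Complex.I * z * x).re = 0 := by simp
        rw [h2, Real.exp_zero, one_mul, _root_.abs_of_nonneg (hg0 x)]
    _ = 1 := hg1

lemma theta_measurable (hm : Measurable g) :
    Measurable fun z : ℝ => (∫ x : ℝ, Complex.exp (Complex.I * z * x) * (g x : ℂ)) := by
  have hunc : StronglyMeasurable fun q : ℝ × ℝ => Complex.exp (Complex.I * q.1 * q.2) * (g q.2 : ℂ) := by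
    refine Measurable.stronglyMeasurable ?_
    exact (Complex.measurable_exp.comp ((measurable_const.mul
      (Complex.measurable_ofReal.comp measurable_fst)).mul
      (Complex.measurable_ofReal.comp measurable_snd))).mul
      (Complex.measurable_ofReal.comp (hm.comp measurable_snd))
  exact (StronglyMeasurable.integral_prod_right' (f := fun q : ℝ × ℝ =>
    Complex.exp (Complex.I * q.1 * q.2) * (g q.2 : ℂ)) hunc).measurable

lemma plancherel_ineq (hm : Measurable g) (hg0 : ∀ x, 0 ≤ g x) (hgi : Integrable g)
    (hg1 : ∫ x, g x = 1) (hK : Integrable (fun x => g x ^ 2)) :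
    ∫⁻ z : ℝ, ENNReal.ofReal
        ((‖∫ x : ℝ, Complex.exp (Complex.I * z * x) * (g x : ℂ)‖)^2)
      ≤ ENNReal.ofReal (2 * π * ∫ x, g x ^ 2) := by
  classical
  set θ : ℝ → ℂ := fun z => ∫ x : ℝ, Complex.exp (Complex.I * z * x) * (g x : ℂ) with hθ
  have hθm : Measurable θ := theta_measurable hm
  have hFm : Measurable fun z => (‖θ z‖)^2 :=
    (continuous_norm.measurable.comp hθm).pow measurable_const
  have hFle : ∀ z, (‖θ z‖)^2 ≤ 1 := fun z => by
    have h := theta_abs_le_one hg0 hgi hg1 z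
    nlinarith [norm_nonneg (θ z)]
  -- each Gaussian-regularized integral is bounded
  have hQ : ∀ n : ℕ, ∫⁻ z : ℝ, ENNReal.ofReal
      (rexp (-(1/(n+1 : ℝ)) * z^2) * (‖θ z‖)^2)
      ≤ ENNReal.ofReal (2 * π * ∫ x, g x ^ 2) := by
    intro n
    have hε : (0:ℝ) < 1/(n+1 : ℝ) := by positivity
    have hint : Integrable (fun z : ℝ => rexp (-(1/(n+1 : ℝ)) * z^2) * (‖θ z‖)^2) := by
      refine Integrable.mono' (integrable_exp_neg_mul_sq hε)
        (((measurable_exp.comp ((measurable_id.pow measurable_const).const_mul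
          (-(1/(n+1 : ℝ))))).mul hFm).aestronglyMeasurable)
        (Filter.Eventually.of_forall fun z => ?_)
      rw [Real.norm_eq_abs, _root_.abs_of_nonneg (by positivity)]
      calc rexp (-(1/(n+1 : ℝ)) * z^2) * (‖θ z‖)^2
          ≤ rexp (-(1/(n+1 : ℝ)) * z^2) * 1 :=
            mul_le_mul_of_nonneg_left (hFle z) (Real.exp_nonneg _)
        _ = rexp (-(1/(n+1 : ℝ)) * z^2) := mul_one _
    rw [← ofReal_integral_eq_lintegral_ofReal hint
      (Filter.Eventually.of_forall fun z => by positivity)]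
    apply ENNReal.ofReal_le_ofReal
    rw [hθ]
    rw [core_identity hm hg0 hgi hε]
    exact core_bound hm hg0 hK hε
  -- monotone convergence
  set fn : ℕ → ℝ → ENNReal := fun n z => ENNReal.ofReal
    (rexp (-(1/(n+1 : ℝ)) * z^2) * (‖θ z‖)^2) with hfn
  have hfnm : ∀ n, Measurable (fn n) := fun n =>
    ENNReal.measurable_ofReal.comp ((measurable_exp.comp
      ((measurable_id.pow measurable_const).const_mul (-(1/(n+1 : ℝ))))).mul hFm)
  have hmono : Monotone fn := by
    intro n m hnm z
    apply ENNReal.ofReal_le_ofReal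
    apply mul_le_mul_of_nonneg_right _ (by positivity)
    apply Real.exp_le_exp.mpr
    have h1 : (1:ℝ)/(m+1) ≤ 1/(n+1) := by
      apply div_le_div_of_nonneg_left one_pos.le (by positivity)
      exact_mod_cast by exact_mod_cast add_le_add_left (Nat.cast_le.mpr hnm) 1
    nlinarith [sq_nonneg z]
  have hsup : ∀ z, (⨆ n, fn n z) = ENNReal.ofReal ((‖θ z‖)^2) := by
    intro z
    refine iSup_eq_of_tendsto (fun n m hnm => hmono hnm z) ?_
    have h1 : Filter.Tendsto (fun n : ℕ => -(1/(n+1 : ℝ)) * z^2) Filter.atTop (nhds 0) := by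
      have := tendsto_one_div_add_atTop_nhds_zero_nat (𝕜 := ℝ)
      have h2 := this.neg.mul_const (z^2)
      simpa using h2
    have h2 : Filter.Tendsto (fun n : ℕ => rexp (-(1/(n+1 : ℝ)) * z^2) * (‖θ z‖)^2)
        Filter.atTop (nhds ((‖θ z‖)^2)) := by
      have := (Real.continuous_exp.continuousAt.tendsto.comp h1).mul_const
        ((‖θ z‖)^2)
      simpa using this
    exact (ENNReal.continuous_ofReal.continuousAt.tendsto.comp h2)
  calc ∫⁻ z : ℝ, ENNReal.ofReal ((‖θ z‖)^2)
      = ∫⁻ z : ℝ, ⨆ n, fn n z := by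
        refine lintegral_congr fun z => (hsup z).symm
    _ = ⨆ n, ∫⁻ z : ℝ, fn n z := lintegral_iSup hfnm hmono
    _ ≤ ENNReal.ofReal (2 * π * ∫ x, g x ^ 2) := iSup_le hQ

end TailAux

/-- If a probability density `g` on `ℝ` has characteristic function `θ` with `|θ(z)| ≤ N < 1`
for `|z| ≥ δ`, and `K = ∫ g² < ∞`, then for every integer `a ≥ 2` and every `b > 0`,
`∫_{|z| ≥ δb} |θ(z/b)|^a dz ≤ 2π · b · N^{a−2} · K`. -/
theorem tail_integral_charFun_pow_le
    (g : ℝ → ℝ) (θ : ℝ → ℂ) (δ N : ℝ)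
    (hg0 : ∀ x, 0 ≤ g x) (hg1 : ∫ x, g x = 1)
    (hθ : ∀ z : ℝ, θ z = ∫ x : ℝ, Complex.exp (Complex.I * (z : ℂ) * (x : ℂ)) * (g x : ℂ))
    (hδ : 0 < δ) (hN : N ∈ Set.Ico (0 : ℝ) 1)
    (hbound : ∀ z : ℝ, δ ≤ |z| → ‖θ z‖ ≤ N)
    (hK : Integrable (fun x => g x ^ 2)) :
    ∀ a : ℕ, 2 ≤ a → ∀ b : ℝ, 0 < b →
      ∫ z in {z : ℝ | δ * b ≤ |z|}, ‖θ (z / b)‖ ^ a ≤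
        2 * π * b * N ^ (a - 2) * ∫ x, g x ^ 2 := by
  classical
  -- `g` is integrable (else its integral would be 0, not 1)
  have hgi : Integrable g := by
    by_contra h
    rw [integral_undef h] at hg1
    norm_num at hg1
  -- measurable nonnegative representative of `g`
  obtain ⟨g₀, hg₀m, hgg₀⟩ := hgi.aestronglyMeasurable
  set g' : ℝ → ℝ := fun x => max (g₀ x) 0 with hg'def
  have hg'm : Measurable g' := (hg₀m.measurable).max measurable_const
  have hgg' : g =ᵐ[volume] g' := hgg₀.mono fun x hx => by
    simp only [hg'def, ← hx, max_eq_left (hg0 x)]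
  have hg'0 : ∀ x, 0 ≤ g' x := fun x => le_max_right _ _
  have hg'i : Integrable g' := hgi.congr hgg'
  have hg'1 : ∫ x, g' x = 1 := by rw [← integral_congr_ae hgg']; exact hg1
  have hsq : (fun x => g x ^ 2) =ᵐ[volume] fun x => g' x ^ 2 :=
    hgg'.mono fun x hx => by dsimp only; rw [hx]
  have hK' : Integrable (fun x => g' x ^ 2) := hK.congr hsq
  have hKeq : ∫ x, g x ^ 2 = ∫ x, g' x ^ 2 := integral_congr_ae hsq
  have hθ' : ∀ z : ℝ, θ z = ∫ x : ℝ, Complex.exp (Complex.I * z * x) * (g' x : ℂ) := by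
    intro z
    rw [hθ z]
    exact integral_congr_ae (hgg'.mono fun x hx => by dsimp only; rw [hx])
  have hθm : Measurable θ := by
    have := theta_measurable (g := g') hg'm
    have heq : (fun z : ℝ => ∫ x : ℝ, Complex.exp (Complex.I * z * x) * (g' x : ℂ)) = θ :=
      funext fun z => (hθ' z).symm
    rwa [heq] at this
  have hK0 : (0:ℝ) ≤ ∫ x, g x ^ 2 := integral_nonneg fun x => sq_nonneg _
  -- Plancherel inequality for θ
  have hP : ∫⁻ z : ℝ, ENNReal.ofReal ((‖θ z‖)^2)
      ≤ ENNReal.ofReal (2 * π * ∫ x, g x ^ 2) := by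
    have h := plancherel_ineq (g := g') hg'm hg'0 hg'i hg'1 hK'
    rw [hKeq]
    have heq : ∀ z : ℝ, ENNReal.ofReal ((‖θ z‖)^2)
        = ENNReal.ofReal ((‖∫ x : ℝ,
            Complex.exp (Complex.I * z * x) * (g' x : ℂ)‖)^2) := fun z => by rw [← hθ' z]
    calc ∫⁻ z : ℝ, ENNReal.ofReal ((‖θ z‖)^2)
        = ∫⁻ z : ℝ, ENNReal.ofReal ((‖∫ x : ℝ,
            Complex.exp (Complex.I * z * x) * (g' x : ℂ)‖)^2) := lintegral_congr heq
      _ ≤ _ := h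
  -- main estimate
  intro a ha b hb
  have hFm : Measurable fun z : ℝ => ‖θ (z / b)‖ ^ a :=
    ((continuous_norm.measurable.comp (hθm.comp (measurable_id.div_const b))).pow
      measurable_const)
  have hF2m : Measurable fun z : ℝ => ENNReal.ofReal (N ^ (a-2) * ‖θ (z / b)‖ ^ 2) :=
    ENNReal.measurable_ofReal.comp (((continuous_norm.measurable.comp
      (hθm.comp (measurable_id.div_const b))).pow measurable_const).const_mul _)
  have hpt : ∀ z ∈ {z : ℝ | δ * b ≤ |z|},
      ‖θ (z / b)‖ ^ a ≤ N ^ (a-2) * ‖θ (z / b)‖ ^ 2 := by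
    intro z hz
    have hzb : δ ≤ |z / b| := by
      rw [abs_div, _root_.abs_of_pos hb, le_div_iff₀ hb]
      exact hz
    have hFN : ‖θ (z / b)‖ ≤ N := hbound _ hzb
    have h0 : (0:ℝ) ≤ ‖θ (z / b)‖ := norm_nonneg _
    calc ‖θ (z / b)‖ ^ a
        = ‖θ (z / b)‖ ^ (a - 2) * ‖θ (z / b)‖ ^ 2 := by
          rw [← pow_add, Nat.sub_add_cancel ha]
      _ ≤ N ^ (a-2) * ‖θ (z / b)‖ ^ 2 :=
          mul_le_mul_of_nonneg_right (pow_le_pow_left₀ h0 hFN _) (by positivity)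
  have hchain : ∫⁻ z in {z : ℝ | δ * b ≤ |z|}, ENNReal.ofReal (‖θ (z / b)‖ ^ a)
      ≤ ENNReal.ofReal (2 * π * b * N ^ (a - 2) * ∫ x, g x ^ 2) := by
    have step1 : ∫⁻ z in {z : ℝ | δ * b ≤ |z|}, ENNReal.ofReal (‖θ (z / b)‖ ^ a)
        ≤ ∫⁻ z in {z : ℝ | δ * b ≤ |z|},
            ENNReal.ofReal (N ^ (a-2) * ‖θ (z / b)‖ ^ 2) := by
      refine setLIntegral_mono hF2m fun z hz => ENNReal.ofReal_le_ofReal (hpt z hz)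
    have step2 : ∫⁻ z in {z : ℝ | δ * b ≤ |z|},
        ENNReal.ofReal (N ^ (a-2) * ‖θ (z / b)‖ ^ 2)
        ≤ ∫⁻ z : ℝ, ENNReal.ofReal (N ^ (a-2) * ‖θ (z / b)‖ ^ 2) :=
      setLIntegral_le_lintegral _ _
    have step3 : ∫⁻ z : ℝ, ENNReal.ofReal (N ^ (a-2) * ‖θ (z / b)‖ ^ 2)
        = ENNReal.ofReal (N ^ (a-2)) * ∫⁻ z : ℝ, ENNReal.ofReal (‖θ (z / b)‖ ^ 2) := by
      have : ∀ z : ℝ, ENNReal.ofReal (N ^ (a-2) * ‖θ (z / b)‖ ^ 2)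
          = ENNReal.ofReal (N ^ (a-2)) * ENNReal.ofReal (‖θ (z / b)‖ ^ 2) := fun z =>
        ENNReal.ofReal_mul (pow_nonneg hN.1 _)
      rw [lintegral_congr this]
      exact lintegral_const_mul _ (ENNReal.measurable_ofReal.comp
        ((continuous_norm.measurable.comp (hθm.comp (measurable_id.div_const b))).pow
          measurable_const))
    have step4 : ∫⁻ z : ℝ, ENNReal.ofReal (‖θ (z / b)‖ ^ 2)
        = ENNReal.ofReal b * ∫⁻ w : ℝ, ENNReal.ofReal (‖θ w‖ ^ 2) := by
      have hψm : Measurable fun w : ℝ => ENNReal.ofReal (‖θ w‖ ^ 2) :=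
        ENNReal.measurable_ofReal.comp ((continuous_norm.measurable.comp hθm).pow
          measurable_const)
      have hdiv : ∀ z : ℝ, z / b = b⁻¹ * z := fun z => by rw [div_eq_inv_mul]
      simp_rw [hdiv]
      rw [← lintegral_map hψm (measurable_const_mul b⁻¹),
        Real.map_volume_mul_left (inv_ne_zero hb.ne'), lintegral_smul_measure]
      congr 1
      rw [inv_inv, _root_.abs_of_pos hb]
    calc ∫⁻ z in {z : ℝ | δ * b ≤ |z|}, ENNReal.ofReal (‖θ (z / b)‖ ^ a)
        ≤ ENNReal.ofReal (N ^ (a-2)) * (ENNReal.ofReal b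
            * ∫⁻ w : ℝ, ENNReal.ofReal (‖θ w‖ ^ 2)) := by
          rw [← step4, ← step3]
          exact step1.trans step2
      _ ≤ ENNReal.ofReal (N ^ (a-2)) * (ENNReal.ofReal b
            * ENNReal.ofReal (2 * π * ∫ x, g x ^ 2)) := by
          gcongr
      _ = ENNReal.ofReal (2 * π * b * N ^ (a - 2) * ∫ x, g x ^ 2) := by
          rw [← ENNReal.ofReal_mul hb.le, ← ENNReal.ofReal_mul (pow_nonneg hN.1 _)]
          congr 1
          ring
  rw [integral_eq_lintegral_of_nonneg_ae
    (Filter.Eventually.of_forall fun z => by positivity)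
    (hFm.aestronglyMeasurable.restrict)]
  exact ENNReal.toReal_le_of_le_ofReal
    (mul_nonneg (mul_nonneg (by positivity) (pow_nonneg hN.1 _)) hK0) hchain
end

section
/- For every real k, ∫_0^∞ (1−cos v)·cos(kv)·v^{−2} dv = (π/2)·max(1−|k|, 0). -/
open MeasureTheory Real Set

open Filter
open scoped ENNReal Topology


namespace CauchyAux

/-- ∫ t in (0,∞), t·e^{-tv} dt = 1/v² for v > 0, plus integrability. -/
lemma hasDeriv_G {v : ℝ} (hv : 0 < v) (t : ℝ) :
    HasDerivAt (fun t : ℝ => -(Real.exp (-(t*v)) * (t*v + 1)) / v^2)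
      (t * Real.exp (-(t*v))) t := by
  have h1 : HasDerivAt (fun t : ℝ => -(t*v)) (-v) t := by
    simpa [Pi.neg_def] using ((hasDerivAt_id t).mul_const v).neg
  have h2 : HasDerivAt (fun t : ℝ => Real.exp (-(t*v))) (Real.exp (-(t*v)) * (-v)) t :=
    h1.exp
  have h3 : HasDerivAt (fun t : ℝ => t*v + 1) v t := by
    simpa using ((hasDerivAt_id t).mul_const v).add_const 1
  have h4 := ((h2.mul h3).neg).div_const (v^2)
  refine h4.congr_deriv ?_
  field_simp
  ring

lemma tendsto_G {v : ℝ} (hv : 0 < v) :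
    Tendsto (fun t : ℝ => -(Real.exp (-(t*v)) * (t*v + 1)) / v^2) atTop (𝓝 0) := by
  have h : Tendsto (fun t : ℝ => t*v) atTop atTop :=
    Tendsto.atTop_mul_const hv tendsto_id
  have h2 : Tendsto (fun u : ℝ => -(Real.exp (-u) * (u + 1)) / v^2) atTop (𝓝 0) := by
    have h3 : Tendsto (fun u : ℝ => u * Real.exp (-u) + Real.exp (-u)) atTop (𝓝 (0 + 0)) := by
      apply Tendsto.add
      · simpa using Real.tendsto_pow_mul_exp_neg_atTop_nhds_zero 1
      · exact Real.tendsto_exp_neg_atTop_nhds_zero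
    have := (h3.div_const (v^2)).neg
    simp only [neg_zero, add_zero, zero_div] at this
    convert this using 2 with u
    ring
  exact h2.comp h

lemma integrableOn_t_exp {v : ℝ} (hv : 0 < v) :
    IntegrableOn (fun t : ℝ => t * Real.exp (-(t*v))) (Ioi (0:ℝ)) := by
  apply integrableOn_Ioi_deriv_of_nonneg' (l := 0) (fun t _ => hasDeriv_G hv t)
    (fun t ht => by have := (mem_Ioi.mp ht).le; positivity) (tendsto_G hv)

lemma integral_t_exp {v : ℝ} (hv : 0 < v) :
    ∫ t in Ioi (0:ℝ), t * Real.exp (-(t*v)) = 1 / v^2 := by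
  rw [integral_Ioi_of_hasDerivAt_of_nonneg' (l := 0) (fun t _ => hasDeriv_G hv t)
    (fun t ht => by have := (mem_Ioi.mp ht).le; positivity) (tendsto_G hv)]
  simp
  field_simp

/-- ∫ v in (0,∞), e^{-tv} dv = 1/t for t > 0. -/
lemma integral_exp {t : ℝ} (ht : 0 < t) :
    ∫ v in Ioi (0:ℝ), Real.exp (-(t*v)) = 1/t := by
  have := integral_comp_mul_left_Ioi (g := fun x => Real.exp (-x)) (a := 0) ht
  simp only [mul_zero] at this
  rw [show (fun v : ℝ => Real.exp (-(t*v))) = (fun v => Real.exp (-(t*v))) from rfl]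
  calc ∫ v in Ioi (0:ℝ), Real.exp (-(t*v)) = t⁻¹ • ∫ x in Ioi (0:ℝ), Real.exp (-x) := this
    _ = 1/t := by rw [integral_exp_neg_Ioi_zero]; simp [one_div]

lemma integrableOn_exp {t : ℝ} (ht : 0 < t) :
    IntegrableOn (fun v : ℝ => Real.exp (-(t*v))) (Ioi (0:ℝ)) := by
  simpa [neg_mul] using exp_neg_integrableOn_Ioi 0 ht

/-- ∫ v in (0,∞), e^{-tv}·cos v dv = t/(1+t²) for t > 0. -/
lemma hasDeriv_F {t : ℝ} (ht : 0 < t) (v : ℝ) :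
    HasDerivAt (fun v : ℝ => Real.exp (-(t*v)) * (Real.sin v - t * Real.cos v) / (1 + t^2))
      (Real.exp (-(t*v)) * Real.cos v) v := by
  have h1 : HasDerivAt (fun v : ℝ => -(t*v)) (-t) v := by
    simpa [Pi.neg_def] using ((hasDerivAt_id v).const_mul t).neg
  have h2 : HasDerivAt (fun v : ℝ => Real.exp (-(t*v))) (Real.exp (-(t*v)) * (-t)) v := h1.exp
  have h3 : HasDerivAt (fun v : ℝ => Real.sin v - t * Real.cos v)
      (Real.cos v - t * (-Real.sin v)) v :=
    (Real.hasDerivAt_sin v).sub ((Real.hasDerivAt_cos v).const_mul t)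
  have h4 := (h2.mul h3).div_const (1 + t^2)
  refine h4.congr_deriv ?_
  have h5 : (1 : ℝ) + t^2 ≠ 0 := by positivity
  field_simp
  ring

lemma integrableOn_exp_cos {t : ℝ} (ht : 0 < t) :
    IntegrableOn (fun v : ℝ => Real.exp (-(t*v)) * Real.cos v) (Ioi (0:ℝ)) := by
  apply (integrableOn_exp ht).mono' ?_ ?_
  · apply Measurable.aestronglyMeasurable; fun_prop
  · filter_upwards with v
    rw [norm_mul, Real.norm_eq_abs, Real.norm_eq_abs, Real.abs_exp]
    calc Real.exp (-(t*v)) * |Real.cos v| ≤ Real.exp (-(t*v)) * 1 := by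
          gcongr; exact Real.abs_cos_le_one v
      _ = Real.exp (-(t*v)) := mul_one _

lemma tendsto_F {t : ℝ} (ht : 0 < t) :
    Tendsto (fun v : ℝ => Real.exp (-(t*v)) * (Real.sin v - t * Real.cos v) / (1 + t^2))
      atTop (𝓝 0) := by
  refine squeeze_zero_norm (a := fun v => Real.exp (-(t*v)) * ((1 + t) / (1 + t^2))) ?_ ?_
  · intro v
    have habs : |Real.sin v - t * Real.cos v| ≤ 1 + t := by
      calc |Real.sin v - t * Real.cos v| ≤ |Real.sin v| + |t * Real.cos v| := abs_sub _ _
        _ ≤ 1 + t := by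
            apply add_le_add
            · exact abs_le.mpr ⟨Real.neg_one_le_sin v, Real.sin_le_one v⟩
            · rw [abs_mul, abs_of_pos ht]
              calc t * |Real.cos v| ≤ t * 1 := by gcongr; exact Real.abs_cos_le_one v
                _ = t := mul_one t
    calc ‖Real.exp (-(t*v)) * (Real.sin v - t * Real.cos v) / (1 + t^2)‖
        = Real.exp (-(t*v)) * |Real.sin v - t * Real.cos v| / (1 + t^2) := by
          rw [norm_div, norm_mul, Real.norm_eq_abs, Real.norm_eq_abs, Real.norm_eq_abs,
            Real.abs_exp, abs_of_pos (show (0:ℝ) < 1 + t^2 by positivity)]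
      _ ≤ Real.exp (-(t*v)) * (1 + t) / (1 + t^2) := by gcongr
      _ = Real.exp (-(t*v)) * ((1 + t) / (1 + t^2)) := by ring
  · have h1 : Tendsto (fun v : ℝ => t * v) atTop atTop :=
      Tendsto.const_mul_atTop ht tendsto_id
    have h : Tendsto (fun v : ℝ => Real.exp (-(t*v))) atTop (𝓝 0) := by
      simpa [Function.comp_def] using Real.tendsto_exp_neg_atTop_nhds_zero.comp h1
    simpa using h.mul_const ((1 + t) / (1 + t^2))

lemma integral_exp_cos {t : ℝ} (ht : 0 < t) :
    ∫ v in Ioi (0:ℝ), Real.exp (-(t*v)) * Real.cos v = t / (1 + t^2) := by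
  rw [integral_Ioi_of_hasDerivAt_of_tendsto' (fun v _ => hasDeriv_F ht v)
    (integrableOn_exp_cos ht) (tendsto_F ht)]
  simp
  ring

/-- Inner integral in v. -/
lemma integrableOn_inner_v {t : ℝ} (ht : 0 < t) :
    IntegrableOn (fun v : ℝ => (1 - Real.cos v) * (t * Real.exp (-(t*v)))) (Ioi (0:ℝ)) := by
  have : (fun v : ℝ => (1 - Real.cos v) * (t * Real.exp (-(t*v))))
      = fun v => t * (Real.exp (-(t*v)) - Real.exp (-(t*v)) * Real.cos v) := by
    funext v; ring
  rw [this]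
  exact (((integrableOn_exp ht).sub (integrableOn_exp_cos ht)).const_mul t)

lemma integral_inner_v {t : ℝ} (ht : 0 < t) :
    ∫ v in Ioi (0:ℝ), (1 - Real.cos v) * (t * Real.exp (-(t*v))) = 1 / (1 + t^2) := by
  have heq : (fun v : ℝ => (1 - Real.cos v) * (t * Real.exp (-(t*v))))
      = fun v => t * (Real.exp (-(t*v)) - Real.exp (-(t*v)) * Real.cos v) := by
    funext v; ring
  rw [heq, integral_const_mul, integral_sub (integrableOn_exp ht) (integrableOn_exp_cos ht),
    integral_exp ht, integral_exp_cos ht]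
  have h5 : (1 : ℝ) + t^2 ≠ 0 := by positivity
  rw [eq_div_iff h5, mul_sub, mul_one_div, div_self ht.ne']
  field_simp
  ring

/-- The key Tonelli computation. -/
lemma key_lintegral :
    ∫⁻ v in Ioi (0:ℝ), ENNReal.ofReal ((1 - Real.cos v) / v^2) = ENNReal.ofReal (π/2) := by
  have hmeas : Measurable (fun p : ℝ × ℝ =>
      ENNReal.ofReal ((1 - Real.cos p.1) * (p.2 * Real.exp (-(p.2 * p.1))))) := by
    fun_prop
  calc ∫⁻ v in Ioi (0:ℝ), ENNReal.ofReal ((1 - Real.cos v) / v^2)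
      = ∫⁻ v in Ioi (0:ℝ), ∫⁻ t in Ioi (0:ℝ),
          ENNReal.ofReal ((1 - Real.cos v) * (t * Real.exp (-(t*v)))) := by
        apply setLIntegral_congr_fun measurableSet_Ioi
        intro v hv
        beta_reduce
        rw [← ofReal_integral_eq_lintegral_ofReal
          ((integrableOn_t_exp hv).const_mul (1 - Real.cos v))
          ((ae_restrict_iff' measurableSet_Ioi).mpr (Filter.Eventually.of_forall fun t ht => by
            have h1 := Real.cos_le_one v
            have h2 := (mem_Ioi.mp ht).le
            have h3 := Real.exp_nonneg (-(t*v))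
            exact mul_nonneg (by linarith) (by positivity)))]
        rw [integral_const_mul, integral_t_exp hv, mul_one_div]
    _ = ∫⁻ t in Ioi (0:ℝ), ∫⁻ v in Ioi (0:ℝ),
          ENNReal.ofReal ((1 - Real.cos v) * (t * Real.exp (-(t*v)))) := by
        apply lintegral_lintegral_swap
        exact hmeas.aemeasurable
    _ = ∫⁻ t in Ioi (0:ℝ), ENNReal.ofReal ((1 + t^2)⁻¹) := by
        apply setLIntegral_congr_fun measurableSet_Ioi
        intro t ht
        have ht' : (0:ℝ) < t := mem_Ioi.mp ht
        beta_reduce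
        rw [← ofReal_integral_eq_lintegral_ofReal (integrableOn_inner_v ht')
          (Filter.Eventually.of_forall fun v => by
            have h1 := Real.cos_le_one v
            have h2 := ht'.le
            have h3 := Real.exp_nonneg (-(t*v))
            exact mul_nonneg (by linarith) (by positivity))]
        rw [integral_inner_v ht', one_div]
    _ = ENNReal.ofReal (π/2) := by
        rw [← ofReal_integral_eq_lintegral_ofReal integrable_inv_one_add_sq.integrableOn
          (Filter.Eventually.of_forall fun t => by positivity)]
        rw [integral_Ioi_inv_one_add_sq]
        norm_num

lemma f_nonneg (a v : ℝ) : 0 ≤ (1 - Real.cos (a*v)) / v^2 := by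
  have := Real.cos_le_one (a*v)
  have h1 : (0:ℝ) ≤ 1 - Real.cos (a*v) := by linarith
  positivity

/-- Integrability of (1−cos v)/v² on (0,∞). -/
lemma integrableOn_base : IntegrableOn (fun v : ℝ => (1 - Real.cos v) / v^2) (Ioi (0:ℝ)) := by
  constructor
  · apply Measurable.aestronglyMeasurable; fun_prop
  · rw [hasFiniteIntegral_iff_norm]
    have : ∫⁻ v in Ioi (0:ℝ), ENNReal.ofReal ‖(1 - Real.cos v) / v^2‖
        = ∫⁻ v in Ioi (0:ℝ), ENNReal.ofReal ((1 - Real.cos v) / v^2) := by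
      apply lintegral_congr fun v => ?_
      rw [Real.norm_eq_abs, abs_of_nonneg (by simpa using f_nonneg 1 v)]
    rw [this, key_lintegral]
    exact ENNReal.ofReal_lt_top

lemma integral_base : ∫ v in Ioi (0:ℝ), (1 - Real.cos v) / v^2 = π/2 := by
  rw [integral_eq_lintegral_of_nonneg_ae
    (Filter.Eventually.of_forall fun v => by simpa using f_nonneg 1 v)
    integrableOn_base.aestronglyMeasurable]
  rw [key_lintegral, ENNReal.toReal_ofReal (by positivity)]

/-- Integrability of (1−cos(av))/v² on (0,∞) for any a. -/
lemma integrableOn_f (a : ℝ) :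
    IntegrableOn (fun v : ℝ => (1 - Real.cos (a*v)) / v^2) (Ioi (0:ℝ)) := by
  rw [← Ioc_union_Ioi_eq_Ioi (zero_le_one (α := ℝ))]
  apply IntegrableOn.union
  · apply Integrable.mono' (integrable_const (a^2/2))
    · apply Measurable.aestronglyMeasurable; fun_prop
    · rw [ae_restrict_iff' measurableSet_Ioc]
      filter_upwards with v hv
      rw [Real.norm_eq_abs, abs_of_nonneg (f_nonneg a v)]
      have h1 : 1 - Real.cos (a*v) ≤ (a*v)^2/2 := by
        have := Real.one_sub_sq_div_two_le_cos (x := a*v)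
        linarith
      have hv0 : 0 < v := hv.1
      rw [div_le_iff₀ (by positivity)]
      calc 1 - Real.cos (a*v) ≤ (a*v)^2/2 := h1
        _ = a^2/2 * v^2 := by ring
  · apply Integrable.mono' (g := fun v : ℝ => 2 / v^2)
    · have h2 : IntegrableOn (fun v : ℝ => v ^ (-2:ℝ)) (Ioi (1:ℝ)) :=
        integrableOn_Ioi_rpow_of_lt (by norm_num) one_pos
      have h3 : IntegrableOn (fun v : ℝ => 2 * v ^ (-2:ℝ)) (Ioi (1:ℝ)) := h2.const_mul 2
      apply h3.congr_fun ?_ measurableSet_Ioi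
      intro v hv
      have hv0 : (0:ℝ) < v := lt_trans one_pos hv
      show 2 * v ^ (-2:ℝ) = 2 / v ^ 2
      rw [show (-2:ℝ) = -((2:ℕ):ℝ) by norm_num, Real.rpow_neg hv0.le, Real.rpow_natCast]
      ring
    · apply Measurable.aestronglyMeasurable; fun_prop
    · rw [ae_restrict_iff' measurableSet_Ioi]
      filter_upwards with v hv
      rw [Real.norm_eq_abs, abs_of_nonneg (f_nonneg a v)]
      have hv0 : 0 < v := lt_trans one_pos hv
      have hc := Real.neg_one_le_cos (a*v)
      gcongr
      linarith

/-- ∫ v in (0,∞), (1−cos(av))/v² = π|a|/2. -/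
lemma integral_f (a : ℝ) :
    ∫ v in Ioi (0:ℝ), (1 - Real.cos (a*v)) / v^2 = π * |a| / 2 := by
  have habs : ∀ v : ℝ, Real.cos (a*v) = Real.cos (|a| * v) := by
    intro v
    rcases abs_cases a with ⟨h, _⟩ | ⟨h, _⟩
    · rw [h]
    · rw [h, neg_mul, Real.cos_neg]
  simp only [habs]
  rcases eq_or_lt_of_le (abs_nonneg a) with h0 | hb
  · simp [← h0]
  · set b := |a| with hbdef
    have hcong : EqOn (fun v : ℝ => (1 - Real.cos (b*v)) / v^2)
        (fun v : ℝ => b^2 * ((1 - Real.cos (b*v)) / (b*v)^2)) (Ioi 0) := by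
      intro v hv
      have hv0 : (0:ℝ) < v := mem_Ioi.mp hv
      field_simp
    rw [setIntegral_congr_fun measurableSet_Ioi hcong]
    have := integral_comp_mul_left_Ioi
      (g := fun u : ℝ => b^2 * ((1 - Real.cos u) / u^2)) (a := 0) hb
    simp only [mul_zero] at this
    rw [this, integral_const_mul, integral_base, smul_eq_mul]
    field_simp

end CauchyAux

open CauchyAux in
/-- For every real `k`, `∫_0^∞ (1−cos v)·cos(kv)·v^{−2} dv = (π/2)·max(1−|k|, 0)`. -/
theorem integral_one_sub_cos_mul_cos_div_sq (k : ℝ) :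
    ∫ v in Ioi (0 : ℝ), (1 - Real.cos v) * Real.cos (k * v) / v ^ 2 =
      π / 2 * max (1 - |k|) 0 := by
  have hsplit : EqOn (fun v : ℝ => (1 - Real.cos v) * Real.cos (k*v) / v^2)
      (fun v : ℝ => (1/2) * ((1 - Real.cos ((1+k)*v))/v^2)
        + (1/2) * ((1 - Real.cos ((1-k)*v))/v^2) - (1 - Real.cos (k*v))/v^2) (Ioi 0) := by
    intro v hv
    have hv0 : v ≠ 0 := (mem_Ioi.mp hv).ne'
    have hc : Real.cos ((1+k)*v) + Real.cos ((1-k)*v)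
        = 2 * (Real.cos v * Real.cos (k*v)) := by
      have e1 : (1+k)*v = v + k*v := by ring
      have e2 : (1-k)*v = v - k*v := by ring
      rw [e1, e2, Real.cos_add, Real.cos_sub]; ring
    show (1 - Real.cos v) * Real.cos (k*v) / v^2 = _
    field_simp
    linear_combination (norm := ring_nf) hc
  rw [setIntegral_congr_fun measurableSet_Ioi hsplit]
  have h1 : IntegrableOn (fun v : ℝ => (1/2) * ((1 - Real.cos ((1+k)*v))/v^2)) (Ioi 0) :=
    (integrableOn_f (1+k)).const_mul (1/2)
  have h2 : IntegrableOn (fun v : ℝ => (1/2) * ((1 - Real.cos ((1-k)*v))/v^2)) (Ioi 0) :=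
    (integrableOn_f (1-k)).const_mul (1/2)
  have hadd : IntegrableOn (fun v : ℝ => (1/2) * ((1 - Real.cos ((1+k)*v))/v^2)
      + (1/2) * ((1 - Real.cos ((1-k)*v))/v^2)) (Ioi 0) := h1.add h2
  rw [integral_sub hadd (integrableOn_f k), integral_add h1 h2,
    integral_const_mul, integral_const_mul, integral_f, integral_f, integral_f]
  rcases le_total |k| 1 with h | h
  · rw [max_eq_left (by linarith)]
    have h1 : |1+k| = 1+k := abs_of_nonneg (by rcases abs_cases k with ⟨_,_⟩|⟨_,_⟩ <;> linarith)
    have h2 : |1-k| = 1-k := abs_of_nonneg (by rcases abs_cases k with ⟨_,_⟩|⟨_,_⟩ <;> linarith)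
    rw [h1, h2]; ring
  · rw [max_eq_right (by linarith)]
    rcases abs_cases k with ⟨hk, hk2⟩ | ⟨hk, hk2⟩
    · have h1 : |1+k| = 1+k := abs_of_nonneg (by linarith)
      have h2 : |1-k| = -(1-k) := abs_of_nonpos (by linarith)
      rw [h1, h2, hk]; ring
    · have h1 : |1+k| = -(1+k) := abs_of_nonpos (by linarith)
      have h2 : |1-k| = 1-k := abs_of_nonneg (by linarith)
      rw [h1, h2, hk]; ring
end

section
/- For every α ∈ (0,2) and every k > 0, ∫_0^∞ sin(kv)·sin(v)·v^{−1−α} dv = (π/4)·(|k+1|^α − |k−1|^α) / (Γ(1+α)·sin(πα/2)). In particular this integral is O(k^{α−1}) as k → ∞. -/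
open MeasureTheory Real Set Filter Asymptotics

lemma L0 {b : ℝ} (hb : 0 < b) : ∫ u in Ioi (0:ℝ), Real.exp (-(b*u)) = 1/b := by
  have := integral_comp_mul_left_Ioi (fun u => Real.exp (-u)) 0 hb
  simp only [mul_zero, integral_exp_neg_Ioi_zero, smul_eq_mul, mul_one] at this
  rw [this, one_div]

lemma Lcos (x : ℝ) : 1 - Real.cos x ≤ x^2 / 2 := by
  have := Real.one_sub_sq_div_two_le_cos (x := x)
  linarith

lemma L2 {α : ℝ} (hα0 : 0 < α) (hα2 : α < 2) (b : ℝ) :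
    IntegrableOn (fun v => (1 - Real.cos (b*v)) * v ^ (-(1+α))) (Ioi (0:ℝ)) := by
  have hmeas : AEStronglyMeasurable (fun v : ℝ => (1 - Real.cos (b*v)) * v ^ (-(1+α)))
      (volume.restrict (Ioi (0:ℝ))) := by
    apply Measurable.aestronglyMeasurable
    fun_prop
  have h1 : IntegrableOn (fun v => (1 - Real.cos (b*v)) * v ^ (-(1+α))) (Ioc (0:ℝ) 1) := by
    have hint : IntegrableOn (fun v : ℝ => b^2/2 * v ^ (1-α)) (Ioc (0:ℝ) 1) := by
      refine ((intervalIntegrable_iff_integrableOn_Ioc_of_le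
        (by norm_num : (0:ℝ) ≤ 1)).mp ?_)
      exact (intervalIntegral.intervalIntegrable_rpow' (by linarith)).const_mul _
    refine Integrable.mono' hint (hmeas.mono_measure (Measure.restrict_mono Ioc_subset_Ioi_self le_rfl)) ?_
    filter_upwards [ae_restrict_mem measurableSet_Ioc] with v hv
    have hv0 : 0 < v := hv.1
    have hnn : 0 ≤ 1 - Real.cos (b*v) := by
      have := Real.cos_le_one (b*v); linarith
    rw [Real.norm_eq_abs, abs_of_nonneg (by positivity)]
    have hb1 : 1 - Real.cos (b*v) ≤ (b*v)^2/2 := Lcos _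
    have h2 : (b*v)^2/2 * v ^ (-(1+α)) = b^2/2 * (v^(2:ℝ) * v ^ (-(1+α))) := by
      rw [Real.rpow_two]; ring
    have h3 : v^(2:ℝ) * v ^ (-(1+α)) = v ^ (1-α) := by
      rw [← Real.rpow_add hv0]; norm_num; ring_nf
    calc (1 - Real.cos (b*v)) * v ^ (-(1+α))
        ≤ (b*v)^2/2 * v ^ (-(1+α)) := by
          apply mul_le_mul_of_nonneg_right hb1 (Real.rpow_nonneg hv0.le _)
      _ = b^2/2 * v ^ (1-α) := by rw [h2, h3]
  have h2 : IntegrableOn (fun v => (1 - Real.cos (b*v)) * v ^ (-(1+α))) (Ioi (1:ℝ)) := by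
    have hint : IntegrableOn (fun v : ℝ => 2 * v ^ (-(1+α))) (Ioi (1:ℝ)) :=
      (integrableOn_Ioi_rpow_of_lt (by linarith) one_pos).const_mul 2
    refine Integrable.mono' hint (hmeas.mono_measure (Measure.restrict_mono (Ioi_subset_Ioi zero_le_one) le_rfl)) ?_
    filter_upwards [ae_restrict_mem measurableSet_Ioi] with v hv
    have hv0 : (0:ℝ) < v := lt_trans one_pos hv
    have hnn : 0 ≤ 1 - Real.cos (b*v) := by have := Real.cos_le_one (b*v); linarith
    rw [Real.norm_eq_abs, abs_of_nonneg (by positivity)]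
    have : 1 - Real.cos (b*v) ≤ 2 := by have := Real.neg_one_le_cos (b*v); linarith
    exact mul_le_mul_of_nonneg_right this (Real.rpow_nonneg hv0.le _)
  have : Ioi (0:ℝ) = Ioc 0 1 ∪ Ioi 1 := (Ioc_union_Ioi_eq_Ioi zero_le_one).symm
  rw [this]
  exact h1.union h2

lemma L3 {t : ℝ} (ht : 0 < t) :
    ∫ v in Ioi (0:ℝ), (1 - Real.cos v) * Real.exp (-(t*v)) = 1/(t*(t^2+1)) := by
  set F : ℝ → ℝ := fun v => -Real.exp (-(t*v))/t + Real.exp (-(t*v))*(t*Real.cos v - Real.sin v)/(t^2+1) with hF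
  have ht1 : t^2+1 ≠ 0 := by positivity
  have hderiv : ∀ v ∈ Ici (0:ℝ), HasDerivAt F ((1 - Real.cos v) * Real.exp (-(t*v))) v := by
    intro v _
    have he : HasDerivAt (fun v : ℝ => Real.exp (-(t*v))) (-t * Real.exp (-(t*v))) v := by
      have : HasDerivAt (fun v : ℝ => -(t*v)) (-t) v := by
        simpa [neg_mul] using ((hasDerivAt_id v).const_mul (-t))
      simpa [mul_comm] using this.exp
    have hc : HasDerivAt (fun v : ℝ => t*Real.cos v - Real.sin v)
        (t * (-Real.sin v) - Real.cos v) v :=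
      ((Real.hasDerivAt_cos v).const_mul t).sub (Real.hasDerivAt_sin v)
    have h1 : HasDerivAt (fun v : ℝ => -Real.exp (-(t*v))/t)
        (Real.exp (-(t*v))) v := by
      have := (he.neg).div_const t
      simpa [mul_comm, mul_div_assoc, neg_div, neg_mul, mul_div_cancel_left₀ _ ht.ne'] using this
    have h2 := ((he.mul hc).div_const (t^2+1))
    have := h1.add h2
    refine this.congr_deriv ?_
    rw [add_div' _ _ _ ht1, div_eq_iff ht1]
    ring
  have hint : IntegrableOn (fun v => (1 - Real.cos v) * Real.exp (-(t*v))) (Ioi (0:ℝ)) := by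
    have hb : IntegrableOn (fun v : ℝ => 2 * Real.exp (-(t*v))) (Ioi (0:ℝ)) := by
      have := (exp_neg_integrableOn_Ioi 0 ht).const_mul 2
      simp only [neg_mul] at this; exact this
    refine Integrable.mono' hb ?_ ?_
    · apply Measurable.aestronglyMeasurable; fun_prop
    · filter_upwards with v
      have h0 : 0 ≤ 1 - Real.cos v := by have := Real.cos_le_one v; linarith
      rw [Real.norm_eq_abs, abs_of_nonneg (mul_nonneg h0 (Real.exp_pos _).le)]
      have h1 : 1 - Real.cos v ≤ 2 := by have := Real.neg_one_le_cos v; linarith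
      exact mul_le_mul_of_nonneg_right h1 (Real.exp_pos _).le
  have htend : Tendsto F atTop (nhds 0) := by
    have hexp : Tendsto (fun v : ℝ => Real.exp (-(t*v))) atTop (nhds 0) := by
      apply Real.tendsto_exp_atBot.comp
      exact tendsto_neg_atTop_atBot.comp (tendsto_id.const_mul_atTop ht)
    have h1 : Tendsto (fun v : ℝ => -Real.exp (-(t*v))/t) atTop (nhds 0) := by
      simpa using (hexp.neg.div_const t)
    have h2 : Tendsto (fun v : ℝ => Real.exp (-(t*v))*(t*Real.cos v - Real.sin v)/(t^2+1))
        atTop (nhds 0) := by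
      apply squeeze_zero_norm (a := fun v : ℝ => Real.exp (-(t*v)) * (|t|+1) / (t^2+1)) (f := fun v : ℝ => Real.exp (-(t*v))*(t*Real.cos v - Real.sin v)/(t^2+1))
      · intro v
        rw [Real.norm_eq_abs, abs_div, abs_mul, Real.abs_exp,
          abs_of_pos (show (0:ℝ) < t^2+1 by positivity)]
        apply div_le_div_of_nonneg_right ?_ (by positivity)
        apply mul_le_mul_of_nonneg_left ?_ (Real.exp_pos _).le
        calc |t * Real.cos v - Real.sin v| ≤ |t * Real.cos v| + |Real.sin v| := abs_sub _ _
          _ ≤ |t| * 1 + 1 := by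
              rw [abs_mul]
              exact add_le_add (mul_le_mul_of_nonneg_left (Real.abs_cos_le_one v) (abs_nonneg t))
                (Real.abs_sin_le_one v)
          _ = |t| + 1 := by ring
      · simpa using ((hexp.mul_const (|t|+1)).div_const (t^2+1))
    simpa using h1.add h2
  have := integral_Ioi_of_hasDerivAt_of_tendsto' (f := F)
    (fun x hx => hderiv x hx) hint htend
  rw [this]
  simp only [hF]
  rw [mul_zero, neg_zero, Real.exp_zero, Real.cos_zero, Real.sin_zero]
  field_simp
  ring

lemma L4 {α : ℝ} (hα0 : 0 < α) (hα2 : α < 2) :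
    IntegrableOn (fun t : ℝ => t ^ (α-1) * (1/(1+t^2))) (Ioi (0:ℝ)) := by
  have hmeas : AEStronglyMeasurable (fun t : ℝ => t ^ (α-1) * (1/(1+t^2)))
      (volume.restrict (Ioi (0:ℝ))) := by
    apply Measurable.aestronglyMeasurable; fun_prop (disch := intro x; positivity)
  have h1 : IntegrableOn (fun t : ℝ => t ^ (α-1) * (1/(1+t^2))) (Ioc (0:ℝ) 1) := by
    have hint : IntegrableOn (fun t : ℝ => t ^ (α-1)) (Ioc (0:ℝ) 1) :=
      (intervalIntegrable_iff_integrableOn_Ioc_of_le (by norm_num : (0:ℝ) ≤ 1)).mp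
        (intervalIntegral.intervalIntegrable_rpow' (by linarith))
    refine Integrable.mono' hint (hmeas.mono_measure
      (Measure.restrict_mono Ioc_subset_Ioi_self le_rfl)) ?_
    filter_upwards [ae_restrict_mem measurableSet_Ioc] with t htm
    have ht0 : 0 < t := htm.1
    rw [Real.norm_eq_abs, abs_of_nonneg (by positivity)]
    nth_rewrite 2 [show t ^ (α-1) = t ^ (α-1) * 1 by ring]
    apply mul_le_mul_of_nonneg_left ?_ (Real.rpow_nonneg ht0.le _)
    rw [div_le_one (by positivity)]; nlinarith
  have h2 : IntegrableOn (fun t : ℝ => t ^ (α-1) * (1/(1+t^2))) (Ioi (1:ℝ)) := by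
    have hint : IntegrableOn (fun t : ℝ => t ^ (α-3)) (Ioi (1:ℝ)) :=
      integrableOn_Ioi_rpow_of_lt (by linarith) one_pos
    refine Integrable.mono' hint (hmeas.mono_measure
      (Measure.restrict_mono (Ioi_subset_Ioi zero_le_one) le_rfl)) ?_
    filter_upwards [ae_restrict_mem measurableSet_Ioi] with t htm
    have ht1 : (1:ℝ) < t := htm
    have ht0 : (0:ℝ) < t := lt_trans one_pos ht1
    rw [Real.norm_eq_abs, abs_of_nonneg (by positivity)]
    have key : t ^ (α-3) = t ^ (α-1) * (1/t^2) := by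
      rw [show α-3 = (α-1) + (-2) by ring, Real.rpow_add ht0, Real.rpow_neg ht0.le,
        show ((2:ℝ)) = ((2:ℕ):ℝ) by norm_num, Real.rpow_natCast]
      ring
    rw [key]
    apply mul_le_mul_of_nonneg_left ?_ (Real.rpow_nonneg ht0.le _)
    apply div_le_div_of_nonneg_left one_pos.le (by positivity)
    nlinarith
  rw [show Ioi (0:ℝ) = Ioc 0 1 ∪ Ioi 1 from (Ioc_union_Ioi_eq_Ioi zero_le_one).symm]
  exact h1.union h2

lemma L5 {α : ℝ} (hα0 : 0 < α) (hα2 : α < 2) :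
    ∫ t in Ioi (0:ℝ), t ^ (α-1) * (1/(1+t^2)) = π / (2 * Real.sin (π * α / 2)) := by
  set f : ℝ → ℝ → ℝ := fun t u => t ^ (α-1) * Real.exp (-((1+t^2)*u)) with hf
  have hmeas : AEStronglyMeasurable (Function.uncurry f)
      ((volume.restrict (Ioi (0:ℝ))).prod (volume.restrict (Ioi (0:ℝ)))) := by
    apply Measurable.aestronglyMeasurable
    have : Measurable (fun p : ℝ × ℝ => p.1 ^ (α-1) * Real.exp (-((1+p.1^2)*p.2))) := by fun_prop
    exact this
  -- fiberwise integrability in u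
  have hfib : ∀ t : ℝ, Integrable (fun u => f t u) (volume.restrict (Ioi (0:ℝ))) := by
    intro t
    have h : (0:ℝ) < 1 + t^2 := by positivity
    simp only [hf]
    have := (exp_neg_integrableOn_Ioi 0 h).const_mul (t ^ (α-1))
    refine this.congr ?_
    filter_upwards with u
    rw [neg_mul]
  -- for t > 0, the u-integral evaluates
  have hIu : ∀ t : ℝ, 0 < t → ∫ u in Ioi (0:ℝ), f t u = t ^ (α-1) * (1/(1+t^2)) := by
    intro t ht
    have h : (0:ℝ) < 1 + t^2 := by positivity
    rw [hf]
    simp only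
    rw [MeasureTheory.integral_const_mul]
    have := L0 h
    rw [this]
  -- nonnegativity
  have hnn : ∀ t ∈ Ioi (0:ℝ), ∀ u : ℝ, 0 ≤ f t u := by
    intro t ht u
    have : (0:ℝ) < t := ht
    positivity
  -- joint integrability
  have hjoint : Integrable (Function.uncurry f)
      ((volume.restrict (Ioi (0:ℝ))).prod (volume.restrict (Ioi (0:ℝ)))) := by
    rw [MeasureTheory.integrable_prod_iff hmeas]
    constructor
    · filter_upwards with t
      exact hfib t
    · apply Integrable.congr (L4 hα0 hα2)
      filter_upwards [ae_restrict_mem measurableSet_Ioi] with t ht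
      calc t ^ (α-1) * (1/(1+t^2)) = ∫ u in Ioi (0:ℝ), f t u := (hIu t ht).symm
        _ = ∫ u in Ioi (0:ℝ), ‖Function.uncurry f (t, u)‖ := by
            apply integral_congr_ae
            filter_upwards with u
            rw [Real.norm_eq_abs]
            exact ((abs_of_nonneg (hnn t ht u)).symm : f t u = |f t u|)
  -- swap
  have hswap : ∫ t in Ioi (0:ℝ), ∫ u in Ioi (0:ℝ), f t u
      = ∫ u in Ioi (0:ℝ), ∫ t in Ioi (0:ℝ), f t u := integral_integral_swap hjoint
  -- inner integral over t for a fixed u > 0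
  have hα2' : 0 < α/2 := by linarith
  have h1α2 : 0 < 1 - α/2 := by linarith
  have hIt : ∀ u : ℝ, 0 < u → ∫ t in Ioi (0:ℝ), f t u
      = Real.exp (-u) * u ^ (-(α/2)) * ((1/2) * Real.Gamma (α/2)) := by
    intro u hu
    have key : ∀ t ∈ Ioi (0:ℝ), f t u = Real.exp (-u) * (t ^ (α-1) * Real.exp (-u * t ^ (2:ℝ))) := by
      intro t ht
      have ht0 : (0:ℝ) < t := ht
      rw [hf]
      simp only
      rw [show -((1+t^2)*u) = -u + -(u * t^2) by ring, Real.exp_add,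
        Real.rpow_two]
      ring
    rw [setIntegral_congr_fun measurableSet_Ioi key, MeasureTheory.integral_const_mul,
      integral_rpow_mul_exp_neg_mul_rpow (by norm_num) (by linarith) hu]
    rw [show (α-1+1)/2 = α/2 by ring, show -(α-1+1)/2 = -(α/2) by ring]
    ring
  -- outer integral over u
  have houter : ∫ u in Ioi (0:ℝ), ∫ t in Ioi (0:ℝ), f t u
      = (1/2) * Real.Gamma (α/2) * Real.Gamma (1-α/2) := by
    rw [setIntegral_congr_fun measurableSet_Ioi (fun u hu => hIt u hu)]
    rw [show (fun u : ℝ => Real.exp (-u) * u ^ (-(α/2)) * ((1/2) * Real.Gamma (α/2)))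
      = (fun u : ℝ => ((1/2) * Real.Gamma (α/2)) * (Real.exp (-u) * u ^ ((1-α/2)-1))) from ?_]
    · rw [MeasureTheory.integral_const_mul, ← Real.Gamma_eq_integral h1α2]
    · funext u
      rw [show (1-α/2)-1 = -(α/2) by ring]
      ring
  -- conclude
  have : ∫ t in Ioi (0:ℝ), t ^ (α-1) * (1/(1+t^2)) = ∫ t in Ioi (0:ℝ), ∫ u in Ioi (0:ℝ), f t u :=
    (setIntegral_congr_fun measurableSet_Ioi (fun t ht => (hIu t ht).symm))
  rw [this, hswap, houter]
  have hrefl := Real.Gamma_mul_Gamma_one_sub (α/2)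
  rw [show π * (α/2) = π * α / 2 by ring] at hrefl
  rw [mul_assoc, hrefl]
  ring

lemma L6 {α : ℝ} (hα0 : 0 < α) (hα2 : α < 2) :
    ∫ v in Ioi (0:ℝ), (1 - Real.cos v) * v ^ (-(1+α))
      = π / (2 * Real.Gamma (1+α) * Real.sin (π * α / 2)) := by
  have hΓpos : 0 < Real.Gamma (1+α) := Real.Gamma_pos_of_pos (by linarith)
  set f : ℝ → ℝ → ℝ := fun v t => (1 - Real.cos v) * (t ^ α * Real.exp (-(v*t))) with hf
  have hnn : ∀ v : ℝ, ∀ t ∈ Ioi (0:ℝ), 0 ≤ f v t := by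
    intro v t ht
    have h1 : 0 ≤ 1 - Real.cos v := by have := Real.cos_le_one v; linarith
    have : (0:ℝ) < t := ht
    positivity
  -- t-integral for fixed v > 0
  have hIt : ∀ v : ℝ, 0 < v → ∫ t in Ioi (0:ℝ), f v t
      = (1 - Real.cos v) * (v ^ (-(1+α)) * Real.Gamma (1+α)) := by
    intro v hv
    rw [hf]
    simp only
    rw [MeasureTheory.integral_const_mul]
    congr 1
    have key := integral_rpow_mul_exp_neg_mul_Ioi (a := 1+α) (r := v) (by linarith) hv
    have e1 : ∀ t ∈ Ioi (0:ℝ), t ^ α * Real.exp (-(v*t)) = t ^ ((1+α)-1) * Real.exp (-(v*t)) := by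
      intro t ht; norm_num
    rw [setIntegral_congr_fun measurableSet_Ioi e1, key, one_div,
      ← Real.rpow_neg_one v, ← Real.rpow_mul hv.le, neg_one_mul]
  -- fiberwise integrability in t
  have hfib : ∀ v : ℝ, 0 < v → Integrable (fun t => f v t) (volume.restrict (Ioi (0:ℝ))) := by
    intro v hv
    have base : IntegrableOn (fun t : ℝ => t ^ α * Real.exp (-v * t ^ (1:ℝ))) (Ioi (0:ℝ)) :=
      integrableOn_rpow_mul_exp_neg_mul_rpow (by linarith) one_pos hv
    have base' : IntegrableOn (fun t : ℝ => t ^ α * Real.exp (-(v * t))) (Ioi (0:ℝ)) := by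
      refine base.congr_fun (fun t ht => ?_) measurableSet_Ioi
      dsimp only
      rw [Real.rpow_one, neg_mul]
    simpa [hf] using base'.const_mul (1 - Real.cos v)
  have hmeas : AEStronglyMeasurable (Function.uncurry f)
      ((volume.restrict (Ioi (0:ℝ))).prod (volume.restrict (Ioi (0:ℝ)))) := by
    apply Measurable.aestronglyMeasurable
    have : Measurable (fun p : ℝ × ℝ =>
        (1 - Real.cos p.1) * (p.2 ^ α * Real.exp (-(p.1*p.2)))) := by fun_prop
    exact this
  have hjoint : Integrable (Function.uncurry f)
      ((volume.restrict (Ioi (0:ℝ))).prod (volume.restrict (Ioi (0:ℝ)))) := by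
    rw [MeasureTheory.integrable_prod_iff hmeas]
    constructor
    · filter_upwards [ae_restrict_mem measurableSet_Ioi] with v hv
      exact hfib v hv
    · apply Integrable.congr ((L2 hα0 hα2 1).mul_const (Real.Gamma (1+α)))
      filter_upwards [ae_restrict_mem measurableSet_Ioi] with v hv
      calc (1 - Real.cos (1*v)) * v ^ (-(1+α)) * Real.Gamma (1+α)
          = ∫ t in Ioi (0:ℝ), f v t := by rw [hIt v hv, one_mul]; ring
        _ = ∫ t in Ioi (0:ℝ), ‖Function.uncurry f (v, t)‖ := by
            apply integral_congr_ae
            filter_upwards [ae_restrict_mem measurableSet_Ioi] with t ht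
            rw [Real.norm_eq_abs]
            exact ((abs_of_nonneg (hnn v t ht)).symm : f v t = |f v t|)
  have hswap : ∫ v in Ioi (0:ℝ), ∫ t in Ioi (0:ℝ), f v t
      = ∫ t in Ioi (0:ℝ), ∫ v in Ioi (0:ℝ), f v t := integral_integral_swap hjoint
  -- v-integral for fixed t > 0
  have hIv : ∀ t : ℝ, 0 < t → ∫ v in Ioi (0:ℝ), f v t = t ^ (α-1) * (1/(1+t^2)) := by
    intro t ht
    have e1 : ∀ v ∈ Ioi (0:ℝ), f v t = t ^ α * ((1 - Real.cos v) * Real.exp (-(t*v))) := by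
      intro v hv
      rw [hf]; simp only; rw [mul_comm v t]; ring
    rw [setIntegral_congr_fun measurableSet_Ioi e1, MeasureTheory.integral_const_mul, L3 ht]
    have h2 : (1:ℝ)+t^2 = t^2+1 := by ring
    rw [show α - 1 = α + (-1) by ring, Real.rpow_add ht, Real.rpow_neg_one, h2,
      one_div, one_div, mul_inv]
    ring
  -- conclude
  have lhs_eq : ∫ v in Ioi (0:ℝ), (1 - Real.cos v) * v ^ (-(1+α))
      = (1/Real.Gamma (1+α)) * ∫ v in Ioi (0:ℝ), ∫ t in Ioi (0:ℝ), f v t := by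
    rw [← MeasureTheory.integral_const_mul]
    apply setIntegral_congr_fun measurableSet_Ioi
    intro v hv
    dsimp only
    rw [hIt v hv]
    field_simp
  rw [lhs_eq, hswap,
    setIntegral_congr_fun measurableSet_Ioi (fun t ht => hIv t ht), L5 hα0 hα2]
  field_simp

lemma L7pos {α : ℝ} (hα0 : 0 < α) (hα2 : α < 2) {b : ℝ} (hb : 0 < b) :
    ∫ v in Ioi (0:ℝ), (1 - Real.cos (b*v)) * v ^ (-(1+α))
      = b ^ α * ∫ v in Ioi (0:ℝ), (1 - Real.cos v) * v ^ (-(1+α)) := by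
  set g : ℝ → ℝ := fun v => (1 - Real.cos v) * v ^ (-(1+α)) with hg
  have key : ∀ v ∈ Ioi (0:ℝ), (1 - Real.cos (b*v)) * v ^ (-(1+α)) = b ^ (1+α) * g (b*v) := by
    intro v hv
    have hv0 : (0:ℝ) < v := hv
    rw [hg]
    simp only
    have h1 : (b*v) ^ (-(1+α)) = b ^ (-(1+α)) * v ^ (-(1+α)) := Real.mul_rpow hb.le hv0.le
    have h2 : b ^ (1+α) * b ^ (-(1+α)) = 1 := by
      rw [← Real.rpow_add hb, add_neg_cancel, Real.rpow_zero]
    rw [h1, show b ^ (1+α) * ((1-Real.cos (b*v)) * (b ^ (-(1+α)) * v ^ (-(1+α))))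
      = (b ^ (1+α) * b ^ (-(1+α))) * ((1-Real.cos (b*v)) * v ^ (-(1+α))) by ring, h2, one_mul]
  rw [setIntegral_congr_fun measurableSet_Ioi key, MeasureTheory.integral_const_mul,
    integral_comp_mul_left_Ioi g 0 hb, mul_zero, smul_eq_mul, ← mul_assoc]
  congr 1
  rw [← Real.rpow_neg_one b, ← Real.rpow_add hb]
  ring_nf

lemma L7 {α : ℝ} (hα0 : 0 < α) (hα2 : α < 2) (b : ℝ) :
    ∫ v in Ioi (0:ℝ), (1 - Real.cos (b*v)) * v ^ (-(1+α))
      = |b| ^ α * ∫ v in Ioi (0:ℝ), (1 - Real.cos v) * v ^ (-(1+α)) := by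
  rcases lt_trichotomy b 0 with hb | hb | hb
  · have hc : ∀ v : ℝ, (1 - Real.cos (b*v)) = (1 - Real.cos (-b*v)) := by
      intro v; rw [show -b*v = -(b*v) by ring, Real.cos_neg]
    simp_rw [hc]
    rw [abs_of_neg hb]
    exact L7pos hα0 hα2 (by linarith)
  · subst hb
    simp [Real.zero_rpow hα0.ne']
  · rw [abs_of_pos hb]
    exact L7pos hα0 hα2 hb

lemma L8 {α : ℝ} (hα0 : 0 < α) (hα2 : α < 2) {k : ℝ} (hk : 2 ≤ k) :
    |(k+1) ^ α - (k-1) ^ α| ≤ 4 * α * k ^ (α-1) := by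
  have hk0 : (0:ℝ) < k := by linarith
  have hint := integral_rpow (a := k-1) (b := k+1)
    (Or.inl (by linarith : (-1:ℝ) < α - 1))
  rw [show α - 1 + 1 = α by ring] at hint
  have hbound : ∀ t ∈ Set.uIoc (k-1) (k+1), ‖t ^ (α-1)‖ ≤ 2 * k ^ (α-1) := by
    intro t htm
    rw [Set.uIoc_of_le (by linarith : k-1 ≤ k+1)] at htm
    have ht1 : k - 1 < t := htm.1
    have ht2 : t ≤ k + 1 := htm.2
    have ht0 : (0:ℝ) < t := by linarith
    rw [Real.norm_eq_abs, abs_of_nonneg (Real.rpow_nonneg ht0.le _)]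
    rcases le_total α 1 with h1 | h1
    · have e1 : t ^ (α-1) ≤ (k/2) ^ (α-1) := by
        apply Real.rpow_le_rpow_of_nonpos (by linarith) (by linarith) (by linarith)
      have e2 : (k/2) ^ (α-1) = (2:ℝ) ^ (1-α) * k ^ (α-1) := by
        rw [div_rpow hk0.le (by norm_num), div_eq_mul_inv,
          ← Real.rpow_neg (by norm_num : (0:ℝ) ≤ 2), show -(α-1) = 1-α by ring]
        ring
      have e3 : (2:ℝ) ^ (1-α) ≤ 2 := by
        nth_rewrite 2 [show (2:ℝ) = 2 ^ (1:ℝ) by norm_num]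
        exact Real.rpow_le_rpow_of_exponent_le (by norm_num) (by linarith)
      calc t ^ (α-1) ≤ (2:ℝ) ^ (1-α) * k ^ (α-1) := by rw [← e2]; exact e1
        _ ≤ 2 * k ^ (α-1) :=
          mul_le_mul_of_nonneg_right e3 (Real.rpow_nonneg hk0.le _)
    · have e1 : t ^ (α-1) ≤ (2*k) ^ (α-1) :=
        Real.rpow_le_rpow ht0.le (by linarith) (by linarith)
      have e2 : (2*k) ^ (α-1) = (2:ℝ) ^ (α-1) * k ^ (α-1) :=
        Real.mul_rpow (by norm_num) hk0.le
      have e3 : (2:ℝ) ^ (α-1) ≤ 2 := by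
        nth_rewrite 2 [show (2:ℝ) = 2 ^ (1:ℝ) by norm_num]
        exact Real.rpow_le_rpow_of_exponent_le (by norm_num) (by linarith)
      calc t ^ (α-1) ≤ (2:ℝ) ^ (α-1) * k ^ (α-1) := by rw [← e2]; exact e1
        _ ≤ 2 * k ^ (α-1) :=
          mul_le_mul_of_nonneg_right e3 (Real.rpow_nonneg hk0.le _)
  have hnorm := intervalIntegral.norm_integral_le_of_norm_le_const hbound
  rw [hint] at hnorm
  rw [show k+1 - (k-1) = 2 by ring] at hnorm
  rw [Real.norm_eq_abs, abs_div, abs_of_pos hα0, div_le_iff₀ hα0] at hnorm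
  calc |(k+1) ^ α - (k-1) ^ α| ≤ 2 * k ^ (α-1) * |2| * α := hnorm
    _ = 4 * α * k ^ (α-1) := by rw [abs_of_pos (by norm_num : (0:ℝ) < 2)]; ring
/-- For `α ∈ (0,2)` and `k > 0`,
`∫_0^∞ sin(kv) sin v · v^{−1−α} dv = (π/4)(|k+1|^α − |k−1|^α)/(Γ(1+α) sin(πα/2))`,
and this integral is `O(k^{α−1})` as `k → ∞`. -/
theorem integral_sin_mul_sin_div_rpow (α : ℝ) (hα : α ∈ Set.Ioo (0 : ℝ) 2) :
    (∀ k : ℝ, 0 < k →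
      ∫ v in Ioi (0 : ℝ), Real.sin (k * v) * Real.sin v / v ^ (1 + α) =
        π / 4 * (|k + 1| ^ α - |k - 1| ^ α) / (Real.Gamma (1 + α) * Real.sin (π * α / 2))) ∧
    (fun k : ℝ => ∫ v in Ioi (0 : ℝ), Real.sin (k * v) * Real.sin v / v ^ (1 + α))
      =O[atTop] fun k : ℝ => k ^ (α - 1) := by
  obtain ⟨hα0, hα2⟩ := hα
  have h1 : ∀ k : ℝ, 0 < k →
      ∫ v in Ioi (0 : ℝ), Real.sin (k * v) * Real.sin v / v ^ (1 + α) =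
        π / 4 * (|k + 1| ^ α - |k - 1| ^ α) / (Real.Gamma (1 + α) * Real.sin (π * α / 2)) := by
    intro k hk
    have e : ∀ v ∈ Ioi (0:ℝ), Real.sin (k * v) * Real.sin v / v ^ (1 + α)
        = (1/2) * ((1 - Real.cos ((k+1)*v)) * v ^ (-(1+α))
            - (1 - Real.cos ((k-1)*v)) * v ^ (-(1+α))) := by
      intro v hv
      have hv0 : (0:ℝ) < v := hv
      have hp : (0:ℝ) < v ^ (1+α) := Real.rpow_pos_of_pos hv0 _
      rw [Real.rpow_neg hv0.le, show (k+1)*v = k*v + v by ring,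
        show (k-1)*v = k*v - v by ring, Real.cos_add, Real.cos_sub]
      field_simp
      ring
    rw [setIntegral_congr_fun measurableSet_Ioi e, MeasureTheory.integral_const_mul,
      MeasureTheory.integral_sub (L2 hα0 hα2 (k+1)) (L2 hα0 hα2 (k-1)),
      L7 hα0 hα2 (k+1), L7 hα0 hα2 (k-1), L6 hα0 hα2]
    ring
  refine ⟨h1, ?_⟩
  rw [Asymptotics.isBigO_iff]
  refine ⟨|π/4/(Real.Gamma (1+α) * Real.sin (π*α/2))| * (4*α), ?_⟩
  filter_upwards [eventually_ge_atTop (2:ℝ)] with k hk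
  have hk0 : (0:ℝ) < k := lt_of_lt_of_le two_pos hk
  rw [h1 k hk0]
  have e1 : |k+1| = k+1 := abs_of_pos (by linarith)
  have e2 : |k-1| = k-1 := abs_of_pos (by linarith)
  rw [e1, e2, Real.norm_eq_abs, Real.norm_eq_abs,
    abs_of_nonneg (Real.rpow_nonneg hk0.le (α-1)),
    show π / 4 * ((k+1) ^ α - (k-1) ^ α) / (Real.Gamma (1+α) * Real.sin (π*α/2))
      = π/4/(Real.Gamma (1+α) * Real.sin (π*α/2)) * ((k+1) ^ α - (k-1) ^ α) by ring,
    abs_mul]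
  calc |π/4/(Real.Gamma (1+α) * Real.sin (π*α/2))| * |(k+1) ^ α - (k-1) ^ α|
      ≤ |π/4/(Real.Gamma (1+α) * Real.sin (π*α/2))| * (4 * α * k ^ (α-1)) :=
        mul_le_mul_of_nonneg_left (L8 hα0 hα2 hk) (abs_nonneg _)
    _ = |π/4/(Real.Gamma (1+α) * Real.sin (π*α/2))| * (4*α) * k ^ (α-1) := by ring
end

section
/- For every α ∈ (0,2) there is a constant C_α > 0 such that for all k ≥ 1, |I(α,k)| ≤ C_α·k^{α−2}, where I(α,k) := ∫_0^∞ (1−cos v)·cos(kv)·v^{−1−α} dv. Moreover I(α,k) = −(1/k)·∫_0^∞ sin(kv)·( v sin v − (1+α)(1−cos v) )·v^{−2−α} dv for every k > 0. -/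
open MeasureTheory Real Set Filter Topology

namespace CosKernelAux

lemma one_sub_cos_nonneg (x : ℝ) : 0 ≤ 1 - Real.cos x := by
  have := Real.cos_le_one x; linarith

lemma one_sub_cos_le_two (x : ℝ) : 1 - Real.cos x ≤ 2 := by
  have := Real.neg_one_le_cos x; linarith

lemma one_sub_cos_le_sq (x : ℝ) : 1 - Real.cos x ≤ x ^ 2 / 2 := by
  have h1 : Real.sin (x / 2) ^ 2 = 1 / 2 - Real.cos (2 * (x / 2)) / 2 :=
    Real.sin_sq_eq_half_sub (x / 2)
  rw [show 2 * (x / 2) = x by ring] at h1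
  have h3 : Real.sin (x / 2) ^ 2 ≤ (x / 2) ^ 2 := Real.sin_sq_le_sq
  nlinarith

lemma rpow_sq_div {α v : ℝ} (hv : 0 < v) : v ^ 2 / v ^ (1 + α) = v ^ (1 - α) := by
  rw [← Real.rpow_natCast v 2, ← Real.rpow_sub hv]; ring_nf

lemma rpow_cube_div {α v : ℝ} (hv : 0 < v) : v ^ 3 / v ^ (2 + α) = v ^ (1 - α) := by
  rw [← Real.rpow_natCast v 3, ← Real.rpow_sub hv]; ring_nf

lemma rpow_inv_eq {α v : ℝ} (hv : 0 < v) : (v ^ (1 + α))⁻¹ = v ^ (-1 - α) := by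
  rw [show (-1 - α) = -(1 + α) by ring, Real.rpow_neg hv.le]

lemma rpow_div_two_add {α v : ℝ} (hv : 0 < v) : v / v ^ (2 + α) = v ^ (-1 - α) := by
  rw [show v / v ^ ((2:ℝ) + α) = v ^ (1:ℝ) / v ^ ((2:ℝ) + α) by rw [Real.rpow_one],
    ← Real.rpow_sub hv]; ring_nf

lemma integrableOn_weight {α : ℝ} (hα : α ∈ Set.Ioo (0:ℝ) 2) :
    IntegrableOn (fun v : ℝ => if v ≤ 1 then v ^ (1 - α) else v ^ (-1 - α)) (Ioi (0:ℝ)) := by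
  have h1 : IntegrableOn (fun v : ℝ => v ^ (1 - α)) (Ioc (0:ℝ) 1) := by
    have := intervalIntegral.intervalIntegrable_rpow' (a := (0:ℝ)) (b := 1) (r := 1 - α)
      (by linarith [hα.2])
    rwa [intervalIntegrable_iff_integrableOn_Ioc_of_le zero_le_one] at this
  have h2 : IntegrableOn (fun v : ℝ => v ^ (-1 - α)) (Ioi (1:ℝ)) :=
    integrableOn_Ioi_rpow_of_lt (by linarith [hα.1]) one_pos
  have hs : Ioi (0:ℝ) = Ioc (0:ℝ) 1 ∪ Ioi 1 := (Ioc_union_Ioi_eq_Ioi zero_le_one).symm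
  rw [IntegrableOn, hs]
  apply MeasureTheory.IntegrableOn.union
  · exact h1.congr_fun (fun v hv => by simp [hv.2]) measurableSet_Ioc
  · exact h2.congr_fun (fun v hv => by simp [not_le.2 hv.out]) measurableSet_Ioi

lemma aesm_div_rpow {f : ℝ → ℝ} (hf : Continuous f) (p : ℝ) :
    AEStronglyMeasurable (fun v => f v / v ^ p) (volume.restrict (Ioi (0:ℝ))) := by
  apply ContinuousOn.aestronglyMeasurable _ measurableSet_Ioi
  exact hf.continuousOn.div
    (continuousOn_id.rpow_const fun x hx => Or.inl (ne_of_gt hx))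
    (fun x hx => (Real.rpow_pos_of_pos hx p).ne')

lemma integrable_of_bounds {α : ℝ} (hα : α ∈ Set.Ioo (0:ℝ) 2) {f : ℝ → ℝ}
    (hm : AEStronglyMeasurable f (volume.restrict (Ioi (0:ℝ))))
    {A : ℝ}
    (h1 : ∀ v : ℝ, 0 < v → v ≤ 1 → |f v| ≤ A * v ^ (1 - α))
    (h2 : ∀ v : ℝ, 1 < v → |f v| ≤ A * v ^ (-1 - α)) :
    IntegrableOn f (Ioi (0:ℝ)) := by
  apply Integrable.mono' ((integrableOn_weight hα).const_mul A) hm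
  filter_upwards [ae_restrict_mem measurableSet_Ioi] with v hv
  by_cases h : v ≤ 1
  · simpa [h] using h1 v hv h
  · simpa [h] using h2 v (not_le.1 h)

lemma integrableOn_kernel {α : ℝ} (hα : α ∈ Set.Ioo (0:ℝ) 2) (m : ℝ) :
    IntegrableOn (fun v => (1 - Real.cos (m * v)) / v ^ (1 + α)) (Ioi (0:ℝ)) := by
  apply integrable_of_bounds hα (aesm_div_rpow (by fun_prop) _) (A := m ^ 2 / 2 + 2)
  · intro v hv hv1
    have hd : 0 < v ^ (1 + α) := Real.rpow_pos_of_pos hv _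
    have hw : (0:ℝ) ≤ v ^ (1 - α) := (Real.rpow_pos_of_pos hv _).le
    rw [abs_div, abs_of_nonneg (one_sub_cos_nonneg _), abs_of_nonneg hd.le]
    have hb : 1 - Real.cos (m * v) ≤ m ^ 2 / 2 * v ^ 2 := by
      have := one_sub_cos_le_sq (m * v); nlinarith
    calc (1 - Real.cos (m * v)) / v ^ (1 + α) ≤ (m ^ 2 / 2 * v ^ 2) / v ^ (1 + α) := by
          gcongr
      _ = m ^ 2 / 2 * v ^ (1 - α) := by rw [mul_div_assoc, rpow_sq_div hv]
      _ ≤ (m ^ 2 / 2 + 2) * v ^ (1 - α) := by nlinarith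
  · intro v hv
    have hv0 : (0:ℝ) < v := lt_trans one_pos hv
    have hd : 0 < v ^ (1 + α) := Real.rpow_pos_of_pos hv0 _
    have hw : (0:ℝ) ≤ v ^ (-1 - α) := (Real.rpow_pos_of_pos hv0 _).le
    rw [abs_div, abs_of_nonneg (one_sub_cos_nonneg _), abs_of_nonneg hd.le]
    calc (1 - Real.cos (m * v)) / v ^ (1 + α) ≤ 2 / v ^ (1 + α) := by
          gcongr; exact one_sub_cos_le_two _
      _ = 2 * v ^ (-1 - α) := by rw [div_eq_mul_inv, rpow_inv_eq hv0]
      _ ≤ (m ^ 2 / 2 + 2) * v ^ (-1 - α) := by nlinarith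

lemma integrableOn_A {α : ℝ} (hα : α ∈ Set.Ioo (0:ℝ) 2) (k : ℝ) :
    IntegrableOn (fun v => (1 - Real.cos v) * Real.cos (k * v) / v ^ (1 + α)) (Ioi (0:ℝ)) := by
  apply integrable_of_bounds hα (aesm_div_rpow (by fun_prop) _) (A := 2)
  · intro v hv hv1
    have hd : 0 < v ^ (1 + α) := Real.rpow_pos_of_pos hv _
    have hw : (0:ℝ) ≤ v ^ (1 - α) := (Real.rpow_pos_of_pos hv _).le
    rw [abs_div, abs_of_nonneg hd.le]
    have hb : |(1 - Real.cos v) * Real.cos (k * v)| ≤ 2 * v ^ 2 := by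
      rw [abs_mul, abs_of_nonneg (one_sub_cos_nonneg _)]
      have h1 := one_sub_cos_le_sq v
      have h2 := abs_cos_le_one (k * v)
      nlinarith [one_sub_cos_nonneg v, abs_nonneg (Real.cos (k * v)), sq_nonneg v]
    calc |(1 - Real.cos v) * Real.cos (k * v)| / v ^ (1 + α) ≤ (2 * v ^ 2) / v ^ (1 + α) := by
          gcongr
      _ = 2 * v ^ (1 - α) := by rw [mul_div_assoc, rpow_sq_div hv]
  · intro v hv
    have hv0 : (0:ℝ) < v := lt_trans one_pos hv
    have hd : 0 < v ^ (1 + α) := Real.rpow_pos_of_pos hv0 _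
    rw [abs_div, abs_of_nonneg hd.le]
    have hb : |(1 - Real.cos v) * Real.cos (k * v)| ≤ 2 := by
      rw [abs_mul, abs_of_nonneg (one_sub_cos_nonneg _)]
      have h1 := one_sub_cos_le_two v
      have h2 := abs_cos_le_one (k * v)
      nlinarith [one_sub_cos_nonneg v, abs_nonneg (Real.cos (k * v))]
    calc |(1 - Real.cos v) * Real.cos (k * v)| / v ^ (1 + α) ≤ 2 / v ^ (1 + α) := by gcongr
      _ = 2 * v ^ (-1 - α) := by rw [div_eq_mul_inv, rpow_inv_eq hv0]

lemma integrableOn_B {α : ℝ} (hα : α ∈ Set.Ioo (0:ℝ) 2) {k : ℝ} (hk : 0 < k) :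
    IntegrableOn
      (fun v => Real.sin (k * v) * (v * Real.sin v - (1 + α) * (1 - Real.cos v)) / v ^ (2 + α))
      (Ioi (0:ℝ)) := by
  have hα3 : 1 + α ≤ 3 := by linarith [hα.2]
  have hα0 : 0 ≤ 1 + α := by linarith [hα.1]
  apply integrable_of_bounds hα (aesm_div_rpow (by fun_prop) _) (A := 3 * k + 7)
  · intro v hv hv1
    have hd : 0 < v ^ (2 + α) := Real.rpow_pos_of_pos hv _
    have hw : (0:ℝ) ≤ v ^ (1 - α) := (Real.rpow_pos_of_pos hv _).le
    rw [abs_div, abs_of_nonneg hd.le]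
    have hs : |Real.sin (k * v)| ≤ k * v := by
      have h := Real.abs_sin_le_abs (x := k * v)
      rwa [abs_of_nonneg (mul_nonneg hk.le hv.le)] at h
    have hmid : |v * Real.sin v - (1 + α) * (1 - Real.cos v)| ≤ 3 * v ^ 2 := by
      have h1 : |v * Real.sin v| ≤ v ^ 2 := by
        rw [abs_mul, abs_of_nonneg hv.le]
        have : |Real.sin v| ≤ |v| := Real.abs_sin_le_abs
        rw [abs_of_nonneg hv.le] at this
        nlinarith
      have h2 : |(1 + α) * (1 - Real.cos v)| ≤ 3 * (v ^ 2 / 2) := by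
        rw [abs_mul, abs_of_nonneg hα0, abs_of_nonneg (one_sub_cos_nonneg _)]
        have := one_sub_cos_le_sq v
        nlinarith [one_sub_cos_nonneg v]
      calc |v * Real.sin v - (1 + α) * (1 - Real.cos v)|
          ≤ |v * Real.sin v| + |(1 + α) * (1 - Real.cos v)| := abs_sub _ _
        _ ≤ 3 * v ^ 2 := by nlinarith
    have hb : |Real.sin (k * v) * (v * Real.sin v - (1 + α) * (1 - Real.cos v))|
        ≤ 3 * k * v ^ 3 := by
      rw [abs_mul]
      calc |Real.sin (k * v)| * |v * Real.sin v - (1 + α) * (1 - Real.cos v)|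
          ≤ (k * v) * (3 * v ^ 2) := by
            apply mul_le_mul hs hmid (abs_nonneg _) (by positivity)
        _ = 3 * k * v ^ 3 := by ring
    calc |Real.sin (k * v) * (v * Real.sin v - (1 + α) * (1 - Real.cos v))| / v ^ (2 + α)
        ≤ (3 * k * v ^ 3) / v ^ (2 + α) := by gcongr
      _ = 3 * k * v ^ (1 - α) := by rw [mul_div_assoc, rpow_cube_div hv]
      _ ≤ (3 * k + 7) * v ^ (1 - α) := by nlinarith
  · intro v hv
    have hv0 : (0:ℝ) < v := lt_trans one_pos hv
    have hd : 0 < v ^ (2 + α) := Real.rpow_pos_of_pos hv0 _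
    have hw : (0:ℝ) ≤ v ^ (-1 - α) := (Real.rpow_pos_of_pos hv0 _).le
    rw [abs_div, abs_of_nonneg hd.le]
    have hmid : |v * Real.sin v - (1 + α) * (1 - Real.cos v)| ≤ 7 * v := by
      have h1 : |v * Real.sin v| ≤ v := by
        rw [abs_mul, abs_of_nonneg hv0.le]
        have := Real.abs_sin_le_one (x := v)
        nlinarith [abs_nonneg (Real.sin v)]
      have h2 : |(1 + α) * (1 - Real.cos v)| ≤ 6 := by
        rw [abs_mul, abs_of_nonneg hα0, abs_of_nonneg (one_sub_cos_nonneg _)]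
        have := one_sub_cos_le_two v
        nlinarith [one_sub_cos_nonneg v]
      calc |v * Real.sin v - (1 + α) * (1 - Real.cos v)|
          ≤ |v * Real.sin v| + |(1 + α) * (1 - Real.cos v)| := abs_sub _ _
        _ ≤ 7 * v := by nlinarith
    have hb : |Real.sin (k * v) * (v * Real.sin v - (1 + α) * (1 - Real.cos v))| ≤ 7 * v := by
      rw [abs_mul]
      calc |Real.sin (k * v)| * |v * Real.sin v - (1 + α) * (1 - Real.cos v)|
          ≤ 1 * (7 * v) := by
            apply mul_le_mul (Real.abs_sin_le_one _) hmid (abs_nonneg _) one_pos.le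
        _ = 7 * v := by ring
    calc |Real.sin (k * v) * (v * Real.sin v - (1 + α) * (1 - Real.cos v))| / v ^ (2 + α)
        ≤ (7 * v) / v ^ (2 + α) := by gcongr
      _ = 7 * v ^ (-1 - α) := by rw [mul_div_assoc, rpow_div_two_add hv0]
      _ ≤ (3 * k + 7) * v ^ (-1 - α) := by nlinarith

lemma kernel_integral_eq {α : ℝ} {m : ℝ} (hm : 0 < m) :
    ∫ v in Ioi (0:ℝ), (1 - Real.cos (m * v)) / v ^ (1 + α)
      = m ^ α * ∫ u in Ioi (0:ℝ), (1 - Real.cos u) / u ^ (1 + α) := by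
  have h := MeasureTheory.integral_comp_mul_left_Ioi
    (fun u => (1 - Real.cos u) / u ^ (1 + α)) 0 hm
  rw [mul_zero] at h
  have hmp : (0:ℝ) < m ^ (1 + α) := Real.rpow_pos_of_pos hm _
  have step : ∫ v in Ioi (0:ℝ), (1 - Real.cos (m * v)) / v ^ (1 + α)
      = ∫ v in Ioi (0:ℝ), m ^ (1 + α) * ((1 - Real.cos (m * v)) / (m * v) ^ (1 + α)) := by
    apply setIntegral_congr_fun measurableSet_Ioi
    intro v hv
    have hv0 : (0:ℝ) < v := hv
    have hvp : (0:ℝ) < v ^ (1 + α) := Real.rpow_pos_of_pos hv0 _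
    show (1 - Real.cos (m * v)) / v ^ (1 + α)
      = m ^ (1 + α) * ((1 - Real.cos (m * v)) / (m * v) ^ (1 + α))
    rw [Real.mul_rpow hm.le hv0.le]
    field_simp
  rw [step, integral_const_mul, h, smul_eq_mul, ← mul_assoc]
  congr 1
  rw [← Real.rpow_neg_one m, ← Real.rpow_add hm]
  ring_nf

lemma decomposition {α : ℝ} (hα : α ∈ Set.Ioo (0:ℝ) 2) {k : ℝ} (hk : 1 < k) :
    ∫ v in Ioi (0:ℝ), (1 - Real.cos v) * Real.cos (k * v) / v ^ (1 + α)
      = (((k + 1) ^ α + (k - 1) ^ α) / 2 - k ^ α)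
        * ∫ u in Ioi (0:ℝ), (1 - Real.cos u) / u ^ (1 + α) := by
  have i1 := integrableOn_kernel hα (k + 1)
  have i2 := integrableOn_kernel hα (k - 1)
  have i3 := integrableOn_kernel hα k
  have step : ∫ v in Ioi (0:ℝ), (1 - Real.cos v) * Real.cos (k * v) / v ^ (1 + α)
      = ∫ v in Ioi (0:ℝ), ((1 - Real.cos ((k + 1) * v)) / v ^ (1 + α) / 2
          + (1 - Real.cos ((k - 1) * v)) / v ^ (1 + α) / 2
          - (1 - Real.cos (k * v)) / v ^ (1 + α)) := by
    apply setIntegral_congr_fun measurableSet_Ioi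
    intro v hv
    show (1 - Real.cos v) * Real.cos (k * v) / v ^ (1 + α)
      = (1 - Real.cos ((k + 1) * v)) / v ^ (1 + α) / 2
        + (1 - Real.cos ((k - 1) * v)) / v ^ (1 + α) / 2
        - (1 - Real.cos (k * v)) / v ^ (1 + α)
    have hnum : (1 - Real.cos v) * Real.cos (k * v)
        = ((1 - Real.cos ((k + 1) * v)) + (1 - Real.cos ((k - 1) * v))) / 2
          - (1 - Real.cos (k * v)) := by
      rw [show (k + 1) * v = k * v + v by ring, show (k - 1) * v = k * v - v by ring,
        Real.cos_add, Real.cos_sub]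
      ring
    rw [hnum]; ring
  have i12 : IntegrableOn (fun v => (1 - Real.cos ((k + 1) * v)) / v ^ (1 + α) / 2
      + (1 - Real.cos ((k - 1) * v)) / v ^ (1 + α) / 2) (Ioi (0:ℝ)) :=
    (i1.div_const 2).add (i2.div_const 2)
  rw [step, integral_sub i12 i3,
    integral_add (i1.div_const 2) (i2.div_const 2), integral_div, integral_div,
    kernel_integral_eq (show (0:ℝ) < k + 1 by linarith),
    kernel_integral_eq (show (0:ℝ) < k - 1 by linarith),
    kernel_integral_eq (show (0:ℝ) < k by linarith)]
  ring

lemma second_diff {α : ℝ} (hα : α ∈ Set.Ioo (0:ℝ) 2) {k : ℝ} (hk : 2 ≤ k) :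
    |((k + 1) ^ α + (k - 1) ^ α) / 2 - k ^ α| ≤ 8 * k ^ (α - 2) := by
  obtain ⟨hα0, hα2⟩ := hα
  have hk1 : (1:ℝ) ≤ k - 1 := by linarith
  have hk0 : (0:ℝ) < k - 1 := by linarith
  set g' : ℝ → ℝ := fun x => α * x ^ (α - 1) with hg'
  have hderiv : ∀ x : ℝ, 1 ≤ x → HasDerivAt (fun y : ℝ => y ^ α) (g' x) x := fun x hx =>
    Real.hasDerivAt_rpow_const (Or.inl (by positivity : x ≠ 0))
  obtain ⟨c₁, hc₁, hc1eq⟩ := exists_hasDerivAt_eq_slope (fun y : ℝ => y ^ α) g'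
    (show k < k + 1 by linarith)
    (fun x hx => ((hderiv x (by linarith [hx.1])).continuousAt).continuousWithinAt)
    (fun x hx => hderiv x (by linarith [hx.1]))
  obtain ⟨c₂, hc₂, hc2eq⟩ := exists_hasDerivAt_eq_slope (fun y : ℝ => y ^ α) g'
    (show k - 1 < k by linarith)
    (fun x hx => ((hderiv x (by linarith [hx.1])).continuousAt).continuousWithinAt)
    (fun x hx => hderiv x (by linarith [hx.1]))
  rw [show k + 1 - k = 1 by ring, div_one] at hc1eq
  rw [show k - (k - 1) = 1 by ring, div_one] at hc2eq
  have hc21 : c₂ < c₁ := lt_trans hc₂.2 hc₁.1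
  have hc2pos : (1:ℝ) ≤ c₂ := by linarith [hc₂.1]
  obtain ⟨c₃, hc₃, hc3eq⟩ := exists_hasDerivAt_eq_slope g'
    (fun x => α * ((α - 1) * x ^ (α - 2))) hc21
    (fun x hx => by
      have h1 : (1:ℝ) ≤ x := le_trans hc2pos hx.1
      exact ((Real.hasDerivAt_rpow_const (p := α - 1)
        (Or.inl (by positivity : x ≠ 0))).const_mul α).continuousAt.continuousWithinAt)
    (fun x hx => by
      have h1 : (1:ℝ) ≤ x := le_trans hc2pos hx.1.le
      have h2 := (Real.hasDerivAt_rpow_const (p := α - 1)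
        (Or.inl (by positivity : x ≠ 0))).const_mul α
      rwa [show α - 1 - 1 = α - 2 by ring] at h2)
  have hc3pos : k - 1 < c₃ := lt_trans hc₂.1 hc₃.1
  have hDexpr : ((k + 1) ^ α + (k - 1) ^ α) / 2 - k ^ α
      = α * ((α - 1) * c₃ ^ (α - 2)) * ((c₁ - c₂) / 2) := by
    have h := hc3eq
    rw [eq_div_iff (sub_ne_zero.mpr hc21.ne')] at h
    rw [hc1eq, hc2eq] at h
    nlinarith [h]
  rw [hDexpr]
  have h3 : c₃ ^ (α - 2) ≤ (k - 1) ^ (α - 2) :=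
    Real.rpow_le_rpow_of_nonpos hk0 hc3pos.le (by linarith)
  have h4 : (k - 1) ^ (α - 2) ≤ (k / 2) ^ (α - 2) :=
    Real.rpow_le_rpow_of_nonpos (by linarith) (by linarith) (by linarith)
  have h5 : (k / 2) ^ (α - 2) = k ^ (α - 2) * 2 ^ (2 - α) := by
    rw [Real.div_rpow (by linarith) (by norm_num), show (2:ℝ) - α = -(α - 2) by ring,
      Real.rpow_neg (by norm_num : (0:ℝ) ≤ 2), div_eq_mul_inv]
  have h6 : (2:ℝ) ^ (2 - α) ≤ 4 := by
    have : (2:ℝ) ^ (2 - α) ≤ 2 ^ (2:ℝ) :=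
      Real.rpow_le_rpow_of_exponent_le one_le_two (by linarith)
    have h42 : (2:ℝ) ^ (2:ℝ) = 4 := by
      rw [show (2:ℝ) = ((2:ℕ):ℝ) from by norm_num]
      rw [Real.rpow_natCast]; norm_num
    linarith
  have hc3p : (0:ℝ) < c₃ ^ (α - 2) := Real.rpow_pos_of_pos (by linarith) _
  have hkp : (0:ℝ) < k ^ (α - 2) := Real.rpow_pos_of_pos (by linarith) _
  have hbound : c₃ ^ (α - 2) ≤ 4 * k ^ (α - 2) := by
    calc c₃ ^ (α - 2) ≤ (k / 2) ^ (α - 2) := le_trans h3 h4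
      _ = k ^ (α - 2) * 2 ^ (2 - α) := h5
      _ ≤ 4 * k ^ (α - 2) := by nlinarith
  have hcd : 0 < c₁ - c₂ := by linarith
  have hcd2 : c₁ - c₂ ≤ 2 := by linarith [hc₁.2, hc₂.1]
  calc |α * ((α - 1) * c₃ ^ (α - 2)) * ((c₁ - c₂) / 2)|
      = |α| * (|α - 1| * c₃ ^ (α - 2)) * ((c₁ - c₂) / 2) := by
        rw [abs_mul, abs_mul, abs_mul, abs_of_pos hc3p,
          abs_of_pos (by linarith : (0:ℝ) < (c₁ - c₂) / 2)]
    _ ≤ 2 * (1 * (4 * k ^ (α - 2))) * 1 := by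
        have e1 : |α| ≤ 2 := by rw [abs_of_pos hα0]; linarith
        have e2 : |α - 1| ≤ 1 := by rw [abs_le]; constructor <;> linarith
        have inner2 : |α - 1| * c₃ ^ (α - 2) ≤ 1 * (4 * k ^ (α - 2)) :=
          mul_le_mul e2 hbound hc3p.le (by norm_num)
        have inner1 : |α| * (|α - 1| * c₃ ^ (α - 2)) ≤ 2 * (1 * (4 * k ^ (α - 2))) :=
          mul_le_mul e1 inner2 (mul_nonneg (abs_nonneg _) hc3p.le) (by norm_num)
        exact mul_le_mul inner1 (by linarith) (by linarith) (by nlinarith [hkp])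
    _ = 8 * k ^ (α - 2) := by ring

lemma ibp {α : ℝ} (hα : α ∈ Set.Ioo (0:ℝ) 2) {k : ℝ} (hk : 0 < k) :
    ∫ v in Ioi (0:ℝ), (1 - Real.cos v) * Real.cos (k * v) / v ^ (1 + α)
      = -(1 / k) * ∫ v in Ioi (0:ℝ),
          Real.sin (k * v) * (v * Real.sin v - (1 + α) * (1 - Real.cos v)) / v ^ (2 + α) := by
  obtain ⟨hα0, hα2⟩ := hα
  set F : ℝ → ℝ := fun v => (1 - Real.cos v) * v ^ (-(1 + α)) * (Real.sin (k * v) / k)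
    with hF
  set G : ℝ → ℝ := fun v =>
    (Real.sin v * v ^ (-(1 + α)) + (1 - Real.cos v) * (-(1 + α) * v ^ (-(1 + α) - 1)))
        * (Real.sin (k * v) / k)
      + (1 - Real.cos v) * v ^ (-(1 + α)) * Real.cos (k * v) with hG
  have hF0 : F 0 = 0 := by simp [hF]
  -- derivative
  have hderivF : ∀ v ∈ Ioi (0:ℝ), HasDerivAt F (G v) v := by
    intro v hv
    have hv0 : (0:ℝ) < v := hv
    have h1 : HasDerivAt (fun x : ℝ => 1 - Real.cos x) (Real.sin v) v := by
      have := (Real.hasDerivAt_cos v).const_sub 1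
      simpa using this
    have h2 : HasDerivAt (fun x : ℝ => x ^ (-(1 + α))) (-(1 + α) * v ^ (-(1 + α) - 1)) v :=
      Real.hasDerivAt_rpow_const (Or.inl hv0.ne')
    have h12 := h1.mul h2
    have h3 : HasDerivAt (fun x : ℝ => Real.sin (k * x) / k) (Real.cos (k * v)) v := by
      have hc : HasDerivAt (fun x : ℝ => k * x) k v := by
        simpa using (hasDerivAt_id v).const_mul k
      have h := (Real.hasDerivAt_sin (k * v)).comp v hc
      have h' : HasDerivAt (fun x : ℝ => Real.sin (k * x)) (Real.cos (k * v) * k) v := h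
      have h'' := h'.div_const k
      rwa [mul_div_assoc, div_self hk.ne', mul_one] at h''
    have := h12.mul h3
    exact this
  -- continuity at 0 within Ici 0
  have hcont : ContinuousWithinAt F (Ici (0:ℝ)) 0 := by
    show Tendsto F (𝓝[Ici (0:ℝ)] 0) (𝓝 (F 0))
    rw [hF0]
    apply squeeze_zero_norm' (a := fun v => v ^ (2 - α) / 2)
    · filter_upwards [self_mem_nhdsWithin] with v hv
      rcases eq_or_lt_of_le (mem_Ici.mp hv) with h0 | hv0
      · rw [← h0]
        simp [hF, Real.zero_rpow (show (2:ℝ) - α ≠ 0 by intro h; linarith)]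
      · have hp : 0 < v ^ (-(1 + α)) := Real.rpow_pos_of_pos hv0 _
        have hs : |Real.sin (k * v) / k| ≤ v := by
          rw [abs_div, abs_of_pos hk]
          rw [div_le_iff₀ hk]
          have h := Real.abs_sin_le_abs (x := k * v)
          rw [abs_of_nonneg (mul_nonneg hk.le hv0.le)] at h
          linarith
        have hb : ‖F v‖ ≤ (v ^ 2 / 2) * v ^ (-(1 + α)) * v := by
          rw [Real.norm_eq_abs, hF]
          simp only
          rw [abs_mul, abs_mul, abs_of_nonneg (one_sub_cos_nonneg _), abs_of_pos hp]
          have hq := one_sub_cos_le_sq v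
          apply mul_le_mul (mul_le_mul hq le_rfl hp.le (by positivity)) hs (abs_nonneg _)
            (by positivity)
        have heq : v ^ (2 - α) = v ^ 2 * v ^ (-(1 + α)) * v := by
          rw [← Real.rpow_natCast v 2, ← Real.rpow_add hv0, ← Real.rpow_add_one hv0.ne']
          congr 1
          push_cast
          ring
        calc ‖F v‖ ≤ v ^ 2 / 2 * v ^ (-(1 + α)) * v := hb
          _ = v ^ (2 - α) / 2 := by rw [heq]; ring
    · have hcont2 : ContinuousAt (fun v : ℝ => v ^ (2 - α)) 0 :=
        Real.continuousAt_rpow_const 0 (2 - α) (Or.inr (by linarith))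
      have := (hcont2.tendsto).div_const 2
      rw [Real.zero_rpow (show (2:ℝ) - α ≠ 0 by intro h; linarith), zero_div] at this
      exact this.mono_left nhdsWithin_le_nhds
  -- limit at infinity
  have htop : Tendsto F atTop (𝓝 0) := by
    apply squeeze_zero_norm' (a := fun v => 2 / k * v ^ (-(1 + α)))
    · filter_upwards [eventually_gt_atTop (0:ℝ)] with v hv0
      have hp : 0 < v ^ (-(1 + α)) := Real.rpow_pos_of_pos hv0 _
      have hs : |Real.sin (k * v) / k| ≤ 1 / k := by
        rw [abs_div, abs_of_pos hk]
        exact (div_le_div_iff_of_pos_right hk).mpr (Real.abs_sin_le_one _)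
      have hb : ‖F v‖ ≤ 2 * v ^ (-(1 + α)) * (1 / k) := by
        rw [Real.norm_eq_abs, hF]
        simp only
        rw [abs_mul, abs_mul, abs_of_nonneg (one_sub_cos_nonneg _), abs_of_pos hp]
        apply mul_le_mul (mul_le_mul (one_sub_cos_le_two _) le_rfl hp.le (by norm_num)) hs
          (abs_nonneg _) (by positivity)
      calc ‖F v‖ ≤ 2 * v ^ (-(1 + α)) * (1 / k) := hb
        _ = 2 / k * v ^ (-(1 + α)) := by ring
    · have h0 := tendsto_rpow_neg_atTop (show (0:ℝ) < 1 + α by linarith)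
      have := h0.const_mul (2 / k)
      simpa using this
  -- identification of G with the two integrands
  have hABeq : EqOn (fun v => (1 - Real.cos v) * Real.cos (k * v) / v ^ (1 + α)
      + 1 / k * (Real.sin (k * v) * (v * Real.sin v - (1 + α) * (1 - Real.cos v))
        / v ^ (2 + α))) G (Ioi (0:ℝ)) := by
    intro v hv
    have hv0 : (0:ℝ) < v := hv
    have hvp : (0:ℝ) < v ^ ((1:ℝ) + α) := Real.rpow_pos_of_pos hv0 _
    have e2 : v ^ ((2:ℝ) + α) = v ^ ((1:ℝ) + α) * v := by
      rw [show (2:ℝ) + α = 1 + α + 1 by ring, Real.rpow_add_one hv0.ne']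
    have e3 : v ^ (-((1:ℝ) + α)) = (v ^ ((1:ℝ) + α))⁻¹ := Real.rpow_neg hv0.le _
    have e4 : v ^ (-((1:ℝ) + α) - 1) = (v ^ ((1:ℝ) + α) * v)⁻¹ := by
      rw [show -((1:ℝ) + α) - 1 = -(1 + α + 1) by ring, Real.rpow_neg hv0.le,
        Real.rpow_add_one hv0.ne']
    show _ = G v
    rw [hG]
    simp only
    rw [e2, e3, e4]
    field_simp
    ring
  have hA := integrableOn_A ⟨hα0, hα2⟩ k
  have hB := (integrableOn_B ⟨hα0, hα2⟩ hk).const_mul (1 / k)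
  have hAB : IntegrableOn (fun v => (1 - Real.cos v) * Real.cos (k * v) / v ^ (1 + α)
      + 1 / k * (Real.sin (k * v) * (v * Real.sin v - (1 + α) * (1 - Real.cos v))
        / v ^ (2 + α))) (Ioi (0:ℝ)) := hA.add hB
  have hGint : IntegrableOn G (Ioi (0:ℝ)) :=
    hAB.congr_fun hABeq measurableSet_Ioi
  have key : ∫ v in Ioi (0:ℝ), G v = 0 - F 0 :=
    integral_Ioi_of_hasDerivAt_of_tendsto hcont hderivF hGint htop
  rw [hF0, sub_zero] at key
  have hsplit : ∫ v in Ioi (0:ℝ), G v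
      = (∫ v in Ioi (0:ℝ), (1 - Real.cos v) * Real.cos (k * v) / v ^ (1 + α))
        + 1 / k * ∫ v in Ioi (0:ℝ),
            Real.sin (k * v) * (v * Real.sin v - (1 + α) * (1 - Real.cos v)) / v ^ (2 + α) := by
    rw [← setIntegral_congr_fun measurableSet_Ioi hABeq, integral_add hA hB,
      integral_const_mul]
  rw [hsplit] at key
  linarith

lemma two_rpow_two : (2:ℝ) ^ (2:ℝ) = 4 := by
  rw [show (2:ℝ) = ((2:ℕ):ℝ) from by norm_num, Real.rpow_natCast]
  norm_num

end CosKernelAux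


open CosKernelAux

/-- For `α ∈ (0,2)` there is `C_α > 0` with
`|∫_0^∞ (1−cos v) cos(kv) v^{−1−α} dv| ≤ C_α k^{α−2}` for all `k ≥ 1`; moreover for `k > 0`
the integral equals `−(1/k)∫_0^∞ sin(kv)(v sin v − (1+α)(1−cos v)) v^{−2−α} dv`. -/
theorem cos_transform_kernel_decay (α : ℝ) (hα : α ∈ Set.Ioo (0 : ℝ) 2) :
    (∃ C > 0, ∀ k : ℝ, 1 ≤ k →
      |∫ v in Ioi (0 : ℝ), (1 - Real.cos v) * Real.cos (k * v) / v ^ (1 + α)| ≤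
        C * k ^ (α - 2)) ∧
    ∀ k : ℝ, 0 < k →
      ∫ v in Ioi (0 : ℝ), (1 - Real.cos v) * Real.cos (k * v) / v ^ (1 + α) =
        -(1 / k) * ∫ v in Ioi (0 : ℝ),
          Real.sin (k * v) * (v * Real.sin v - (1 + α) * (1 - Real.cos v)) / v ^ (2 + α) := by
  constructor
  · set c := ∫ u in Ioi (0:ℝ), (1 - Real.cos u) / u ^ (1 + α) with hc
    have hc0 : 0 ≤ c := setIntegral_nonneg measurableSet_Ioi fun v hv =>
      div_nonneg (one_sub_cos_nonneg _) (Real.rpow_pos_of_pos hv _).le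
    refine ⟨12 * c + 1, by linarith, ?_⟩
    intro k hk1
    have hk0 : (0:ℝ) < k := lt_of_lt_of_le one_pos hk1
    have hkp : (0:ℝ) < k ^ (α - 2) := Real.rpow_pos_of_pos hk0 _
    rcases le_or_gt 2 k with hk2 | hk2
    · rw [decomposition hα (by linarith), ← hc, abs_mul, abs_of_nonneg hc0]
      have h1 := second_diff hα hk2
      have : |((k + 1) ^ α + (k - 1) ^ α) / 2 - k ^ α| * c ≤ 8 * k ^ (α - 2) * c :=
        mul_le_mul_of_nonneg_right h1 hc0
      nlinarith [hkp, hc0]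
    · have ig : IntegrableOn (fun v => (1 - Real.cos v) / v ^ (1 + α)) (Ioi (0:ℝ)) := by
        have := integrableOn_kernel hα 1
        simpa using this
      have hIabs : |∫ v in Ioi (0:ℝ), (1 - Real.cos v) * Real.cos (k * v) / v ^ (1 + α)| ≤ c := by
        have step1 : ‖∫ v in Ioi (0:ℝ), (1 - Real.cos v) * Real.cos (k * v) / v ^ (1 + α)‖
            ≤ ∫ v in Ioi (0:ℝ), ‖(1 - Real.cos v) * Real.cos (k * v) / v ^ (1 + α)‖ :=
          norm_integral_le_integral_norm _
        rw [Real.norm_eq_abs] at step1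
        have step2 : ∫ v in Ioi (0:ℝ), ‖(1 - Real.cos v) * Real.cos (k * v) / v ^ (1 + α)‖
            ≤ ∫ v in Ioi (0:ℝ), (1 - Real.cos v) / v ^ (1 + α) := by
          apply setIntegral_mono_on ((integrableOn_A hα k).norm) ig measurableSet_Ioi
          intro v hv
          have hv0 : (0:ℝ) < v := hv
          have hd : (0:ℝ) < v ^ (1 + α) := Real.rpow_pos_of_pos hv0 _
          rw [Real.norm_eq_abs, abs_div, abs_of_nonneg hd.le, abs_mul,
            abs_of_nonneg (one_sub_cos_nonneg _)]
          have hnum : (1 - Real.cos v) * |Real.cos (k * v)| ≤ 1 - Real.cos v := by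
            nlinarith [abs_cos_le_one (k * v), one_sub_cos_nonneg v,
              abs_nonneg (Real.cos (k * v))]
          exact (div_le_div_iff_of_pos_right hd).mpr hnum
        exact le_trans step1 (le_trans step2 (le_of_eq hc.symm))
      have h14 : (1/4:ℝ) ≤ k ^ (α - 2) := by
        have e1 : (2:ℝ) ^ (α - 2) ≤ k ^ (α - 2) :=
          Real.rpow_le_rpow_of_nonpos hk0 hk2.le (by linarith [hα.2])
        have e2 : (2:ℝ) ^ (-2:ℝ) ≤ 2 ^ (α - 2) :=
          Real.rpow_le_rpow_of_exponent_le one_le_two (by linarith [hα.1])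
        have e3 : (2:ℝ) ^ (-2:ℝ) = 1/4 := by
          rw [Real.rpow_neg (by norm_num : (0:ℝ) ≤ 2), two_rpow_two]
          norm_num
        rw [e3] at e2
        linarith
      nlinarith [hIabs, h14, hc0]
  · intro k hk
    exact ibp hα hk
end

section
/- Fix α ∈ (0,2) and let c_α := ( ∫_ℝ (1−cos t)|t|^{−1−α} dt )^{−1}, so that g(u) = c_α(1−cos u)/|u|^{1+α} is a probability density. Let F_n be the law of ξ/n^{1/α} where ξ has density g. Then there exist δ > 0 and c(δ) > 0 such that for all n ≥ 1 and all real z with |z| ≤ δ·n^{1/α}, n·∫_ℝ (1−cos(zu)) F_n(du) ≥ c(δ)·|z|^α. -/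
open MeasureTheory Real Set

private lemma base_meas (α : ℝ) :
    Measurable fun t : ℝ => (1 - Real.cos t) / |t| ^ (1 + α) := by
  fun_prop

private lemma base_nonneg (α : ℝ) (t : ℝ) : 0 ≤ (1 - Real.cos t) / |t| ^ (1 + α) :=
  div_nonneg (by linarith [Real.cos_le_one t]) (Real.rpow_nonneg (abs_nonneg t) _)

private lemma base_integrable (α : ℝ) (hα : α ∈ Set.Ioo (0 : ℝ) 2) :
    Integrable (fun t : ℝ => (1 - Real.cos t) / |t| ^ (1 + α)) := by
  obtain ⟨hα0, hα2⟩ := hα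
  set f : ℝ → ℝ := fun t => (1 - Real.cos t) / |t| ^ (1 + α) with hf
  have hIoi : IntegrableOn f (Ioi 0) := by
    have h1 : IntegrableOn f (Ioc 0 1) := by
      have hdom : IntegrableOn (fun t : ℝ => t ^ (1 - α)) (Ioc 0 1) :=
        (intervalIntegrable_iff_integrableOn_Ioc_of_le zero_le_one).1
          (intervalIntegral.intervalIntegrable_rpow' (by linarith))
      refine hdom.integrable.mono ((base_meas α).aestronglyMeasurable.restrict) ?_
      refine (ae_restrict_iff' measurableSet_Ioc).2 (ae_of_all _ fun t ht => ?_)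
      obtain ⟨ht0, ht1⟩ := ht
      have habs : |t| = t := abs_of_pos ht0
      have hpow : (0:ℝ) < t ^ (1 + α) := Real.rpow_pos_of_pos ht0 _
      rw [Real.norm_eq_abs, Real.norm_eq_abs, abs_of_nonneg (base_nonneg α t),
        abs_of_nonneg (Real.rpow_nonneg ht0.le _)]
      simp only [f, habs]
      rw [div_le_iff₀ hpow, ← Real.rpow_add ht0]
      have h12 : (1 - α) + (1 + α) = 2 := by ring
      rw [h12]
      have h2 : t ^ (2:ℝ) = t ^ (2:ℕ) := by
        rw [← Real.rpow_natCast]; norm_num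
      rw [h2]
      nlinarith [Real.one_sub_sq_div_two_le_cos (x := t)]
    have h2 : IntegrableOn f (Ioi 1) := by
      have hdom : IntegrableOn (fun t : ℝ => 2 * t ^ (-(1 + α))) (Ioi 1) :=
        (integrableOn_Ioi_rpow_of_lt (by linarith) zero_lt_one).const_mul 2
      refine hdom.integrable.mono ((base_meas α).aestronglyMeasurable.restrict) ?_
      refine (ae_restrict_iff' measurableSet_Ioi).2 (ae_of_all _ fun t ht => ?_)
      have ht0 : (0:ℝ) < t := lt_trans zero_lt_one ht
      have habs : |t| = t := abs_of_pos ht0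
      have hpow : (0:ℝ) < t ^ (1 + α) := Real.rpow_pos_of_pos ht0 _
      have hd : 2 * t ^ (-(1 + α)) = 2 / t ^ (1 + α) := by
        rw [Real.rpow_neg ht0.le]; ring
      rw [Real.norm_eq_abs, Real.norm_eq_abs, abs_of_nonneg (base_nonneg α t), hd,
        abs_of_nonneg (show (0:ℝ) ≤ 2 / t ^ (1 + α) by positivity), habs]
      gcongr <;> first
        | positivity
        | linarith [Real.neg_one_le_cos t]
    have hu : Ioi (0:ℝ) = Ioc 0 1 ∪ Ioi 1 := (Set.Ioc_union_Ioi_eq_Ioi zero_le_one).symm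
    rw [hu]; exact h1.union h2
  have hIio : IntegrableOn f (Iio 0) := by
    have h := (MeasurePreserving.integrableOn_comp_preimage
      (Measure.measurePreserving_neg (volume : Measure ℝ))
      (Homeomorph.neg ℝ).measurableEmbedding).2 hIoi
    have hset : (Neg.neg ⁻¹' Ioi (0:ℝ)) = Iio 0 := by ext x; simp
    have hfun : (f ∘ Neg.neg) = f := by
      funext t; simp [f, Real.cos_neg, abs_neg]
    rwa [hset, hfun] at h
  rw [← integrableOn_univ, ← Set.Iio_union_Ici (a := (0:ℝ))]
  exact hIio.union ((integrableOn_Ici_iff_integrableOn_Ioi (by exact enorm_ne_top)).2 hIoi)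

private lemma base_pos (α : ℝ) (hα : α ∈ Set.Ioo (0 : ℝ) 2) :
    0 < ∫ t : ℝ, (1 - Real.cos t) / |t| ^ (1 + α) := by
  have hint := base_integrable α hα
  have hset : (0:ℝ) < ∫ t in Set.Ioc 1 2, (1 - Real.cos t) / |t| ^ (1 + α) := by
    rw [← intervalIntegral.integral_of_le one_le_two]
    apply intervalIntegral.intervalIntegral_pos_of_pos_on hint.intervalIntegrable
    · intro x hx
      have hx0 : (0:ℝ) < x := lt_trans zero_lt_one hx.1
      have hcos : Real.cos x < 1 := by
        have := Real.cos_lt_cos_of_nonneg_of_le_pi (le_refl 0)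
          (le_of_lt (lt_trans hx.2 (by linarith [Real.pi_gt_three]))) hx0
        simpa using this
      exact div_pos (by linarith) (Real.rpow_pos_of_pos (by rwa [abs_of_pos hx0]) _)
    · exact one_lt_two
  calc (0:ℝ) < _ := hset
    _ ≤ _ := setIntegral_le_integral hint (ae_of_all _ (base_nonneg α))


set_option maxHeartbeats 1000000 in
/-- Condition (F).(a) for Example 1: with `g(u) = c_α(1−cos u)/|u|^{1+α}` a probability
density and `F_n` the law of `ξ/n^{1/α}` for `ξ` with density `g`, there exist `δ > 0` and
`c(δ) > 0` such that `n ∫ (1−cos(zu)) F_n(du) ≥ c(δ)|z|^α` for all `n ≥ 1`, `|z| ≤ δ n^{1/α}`. -/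
theorem example_one_condition_F (α : ℝ) (hα : α ∈ Set.Ioo (0 : ℝ) 2) (cα : ℝ)
    (hcα : cα = (∫ t : ℝ, (1 - Real.cos t) / |t| ^ (1 + α))⁻¹)
    (μ : Measure ℝ)
    (hμ : μ = volume.withDensity fun u => ENNReal.ofReal (cα * (1 - Real.cos u) / |u| ^ (1 + α)))
    (F : ℕ → Measure ℝ)
    (hF : ∀ n : ℕ, F n = Measure.map (fun x => x / (n : ℝ) ^ (1 / α)) μ) :
    ∃ δ > 0, ∃ c > 0, ∀ n : ℕ, 1 ≤ n → ∀ z : ℝ, |z| ≤ δ * (n : ℝ) ^ (1 / α) →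
      c * |z| ^ α ≤ (n : ℝ) * ∫ u, (1 - Real.cos (z * u)) ∂(F n) := by
  obtain ⟨hα0, hα2⟩ := hα
  have hcαpos : 0 < cα := by rw [hcα]; exact inv_pos.2 (base_pos α ⟨hα0, hα2⟩)
  obtain ⟨ρ, hρ⟩ : ∃ ρ : ℝ → ℝ, ρ = fun u => cα * (1 - Real.cos u) / |u| ^ (1 + α) := ⟨_, rfl⟩
  have hρnn : ∀ u, 0 ≤ ρ u := fun u => by
    rw [hρ]
    exact div_nonneg (mul_nonneg hcαpos.le (by linarith [Real.cos_le_one u]))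
      (Real.rpow_nonneg (abs_nonneg u) _)
  have hρmeas : Measurable ρ := by rw [hρ]; fun_prop
  have hρint : Integrable ρ := by
    have h := (base_integrable α ⟨hα0, hα2⟩).const_mul cα
    rw [hρ]
    simpa [mul_div_assoc] using h
  have hπ : (0:ℝ) < π := Real.pi_pos
  have hπα : (0:ℝ) < π ^ α := Real.rpow_pos_of_pos hπ _
  refine ⟨π / 8, by positivity, cα / (4 * π ^ α), by positivity, fun n hn z hz => ?_⟩
  have hnpos : (0:ℝ) < (n:ℝ) := by exact_mod_cast Nat.pos_of_ne_zero (by omega)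
  obtain ⟨cn, hcn⟩ : ∃ c : ℝ, c = (n : ℝ) ^ (1 / α) := ⟨_, rfl⟩
  have hcnpos : 0 < cn := by rw [hcn]; exact Real.rpow_pos_of_pos hnpos _
  rw [← hcn] at hz
  have hmap : ∫ u, (1 - Real.cos (z * u)) ∂(F n)
      = ∫ x, ρ x * (1 - Real.cos (z * (x / cn))) := by
    rw [hF n, hμ, hcn, hρ]
    rw [integral_map (f := fun u => 1 - Real.cos (z * u)) (by fun_prop)
      ((continuous_const.sub (Real.continuous_cos.comp
        (continuous_const.mul continuous_id))).aestronglyMeasurable)]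
    rw [show (fun u => ENNReal.ofReal (cα * (1 - Real.cos u) / |u| ^ (1 + α)))
        = (fun u => (((fun v => cα * (1 - Real.cos v) / |v| ^ (1 + α)) u).toNNReal : ENNReal))
        from rfl]
    rw [integral_withDensity_eq_integral_smul (by fun_prop) ]
    congr 1
    funext x
    rw [NNReal.smul_def, Real.coe_toNNReal _ (by rw [← hρ]; exact hρnn x), smul_eq_mul]
  rcases eq_or_ne z 0 with rfl | hz0
  · have h0 : ∀ u : ℝ, (1 : ℝ) - Real.cos (0 * u) = 0 := fun u => by simp
    simp [h0, Real.zero_rpow hα0.ne']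
  -- main case
  obtain ⟨y, hy⟩ : ∃ y : ℝ, y = |z| / cn := ⟨_, rfl⟩
  have hy0 : 0 < y := by rw [hy]; exact div_pos (abs_pos.2 hz0) hcnpos
  have hyδ : y ≤ π / 8 := by rw [hy]; exact (div_le_iff₀ hcnpos).2 hz
  obtain ⟨a, hadef⟩ : ∃ a : ℝ, a = π / (2 * y) := ⟨_, rfl⟩
  obtain ⟨b, hbdef⟩ : ∃ b : ℝ, b = π / y := ⟨_, rfl⟩
  have ha : 0 < a := by rw [hadef]; positivity
  have hb : 0 < b := by rw [hbdef]; positivity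
  have hab : a ≤ b := by
    rw [hadef, hbdef, div_le_div_iff₀ (by positivity) (by positivity)]
    nlinarith
  obtain ⟨K, hK⟩ : ∃ K : ℝ, K = cα * (y / π) ^ (1 + α) := ⟨_, rfl⟩
  have hKnn : 0 ≤ K := by
    rw [hK]; exact mul_nonneg hcαpos.le (Real.rpow_nonneg (by positivity) _)
  -- pointwise bound on Ioc a b
  have hpt : ∀ x ∈ Set.Ioc a b, K * (1 - Real.cos x) ≤ ρ x * (1 - Real.cos (z * (x / cn))) := by
    intro x hx
    have hx0 : 0 < x := ha.trans hx.1
    have hya : y * a = π / 2 := by rw [hadef]; field_simp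
    have hyb : y * b = π := by rw [hbdef]; field_simp
    have habs' : |z * (x / cn)| = y * x := by
      rw [abs_mul, abs_div, abs_of_pos hx0, abs_of_pos hcnpos, hy]; ring
    have hcoseq : Real.cos (z * (x / cn)) = Real.cos (y * x) := by
      rw [← Real.cos_abs, habs']
    have hcosle : Real.cos (y * x) ≤ 0 := by
      apply Real.cos_nonpos_of_pi_div_two_le_of_le
      · calc π / 2 = y * a := hya.symm
          _ ≤ y * x := by nlinarith [hx.1]
      · calc y * x ≤ y * b := by nlinarith [hx.2]
          _ = π := hyb
          _ ≤ π + π / 2 := by linarith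
    have h1c : 1 ≤ 1 - Real.cos (z * (x / cn)) := by rw [hcoseq]; linarith
    have hxb : x ^ (1 + α) ≤ (π / y) ^ (1 + α) :=
      Real.rpow_le_rpow hx0.le (hx.2.trans_eq hbdef) (by linarith)
    have hρlb : K * (1 - Real.cos x) ≤ ρ x := by
      have hcx : 0 ≤ 1 - Real.cos x := by linarith [Real.cos_le_one x]
      have hstep : cα * (1 - Real.cos x) / (π / y) ^ (1 + α)
          ≤ cα * (1 - Real.cos x) / x ^ (1 + α) := by
        gcongr
        all_goals first
          | exact mul_nonneg hcαpos.le hcx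
          | exact Real.rpow_pos_of_pos hx0 _
          | exact hxb
      have heq : cα * (1 - Real.cos x) / (π / y) ^ (1 + α) = K * (1 - Real.cos x) := by
        rw [hK, div_eq_mul_inv, ← Real.inv_rpow (by positivity), inv_div]
        ring
      have hρx : ρ x = cα * (1 - Real.cos x) / x ^ (1 + α) := by
        simp only [hρ, abs_of_pos hx0]
      rw [hρx, ← heq]; exact hstep
    calc K * (1 - Real.cos x) ≤ ρ x := hρlb
      _ = ρ x * 1 := (mul_one _).symm
      _ ≤ ρ x * (1 - Real.cos (z * (x / cn))) :=
          mul_le_mul_of_nonneg_left h1c (hρnn x)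
  -- integrability of the product
  have hIprod : Integrable (fun x => ρ x * (1 - Real.cos (z * (x / cn)))) := by
    refine (hρint.const_mul 2).mono
      ((hρmeas.mul (by fun_prop)).aestronglyMeasurable) (ae_of_all _ fun x => ?_)
    have hw : |1 - Real.cos (z * (x / cn))| ≤ 2 :=
      abs_le.2 ⟨by linarith [Real.cos_le_one (z * (x / cn))],
        by linarith [Real.neg_one_le_cos (z * (x / cn))]⟩
    rw [Real.norm_eq_abs, Real.norm_eq_abs, abs_mul, abs_mul, abs_of_nonneg (hρnn x),
      abs_two]
    calc ρ x * |1 - Real.cos (z * (x / cn))| ≤ ρ x * 2 :=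
          mul_le_mul_of_nonneg_left hw (hρnn x)
      _ = 2 * ρ x := mul_comm _ _
  -- set integral bounds
  have hIset : ∫ x in Set.Ioc a b, K * (1 - Real.cos x)
      ≤ ∫ x, ρ x * (1 - Real.cos (z * (x / cn))) := by
    calc ∫ x in Set.Ioc a b, K * (1 - Real.cos x)
        ≤ ∫ x in Set.Ioc a b, ρ x * (1 - Real.cos (z * (x / cn))) :=
          setIntegral_mono_on
            ((continuous_const.mul (continuous_const.sub Real.continuous_cos)).integrableOn_Ioc)
            hIprod.integrableOn measurableSet_Ioc hpt
      _ ≤ ∫ x, ρ x * (1 - Real.cos (z * (x / cn))) :=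
          setIntegral_le_integral hIprod (ae_of_all _ fun x =>
            mul_nonneg (hρnn x) (by linarith [Real.cos_le_one (z * (x / cn))]))
  have hIval : ∫ x in Set.Ioc a b, K * (1 - Real.cos x)
      = K * ((b - a) - (Real.sin b - Real.sin a)) := by
    rw [← intervalIntegral.integral_of_le hab, intervalIntegral.integral_const_mul,
      intervalIntegral.integral_sub intervalIntegrable_const intervalIntegral.intervalIntegrable_cos,
      intervalIntegral.integral_const, integral_cos]
    simp
  have hba : b - a = π / (2 * y) := by rw [hadef, hbdef]; field_simp; ring
  have h42 : 2 ≤ π / (4 * y) := by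
    rw [le_div_iff₀ (by positivity)]; linarith
  have hhalf : π / (4 * y) + π / (4 * y) = π / (2 * y) := by field_simp; ring
  have hsin : Real.sin b - Real.sin a ≤ 2 := by
    linarith [Real.sin_le_one b, Real.neg_one_le_sin a]
  have hval_ge : K * (π / (4 * y)) ≤ K * ((b - a) - (Real.sin b - Real.sin a)) := by
    apply mul_le_mul_of_nonneg_left _ hKnn
    rw [hba]
    linarith
  -- arithmetic identity
  have hcnα : cn ^ α = (n : ℝ) := by
    rw [hcn, ← Real.rpow_mul hnpos.le, one_div_mul_cancel hα0.ne', Real.rpow_one]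
  have hyα : y ^ α = |z| ^ α / (n : ℝ) := by
    rw [hy, Real.div_rpow (abs_nonneg z) hcnpos.le, hcnα]
  have hkey : cα / (4 * π ^ α) * |z| ^ α = (n : ℝ) * (K * (π / (4 * y))) := by
    have hy' : y ≠ 0 := hy0.ne'
    have hπ' : π ≠ 0 := hπ.ne'
    have hπα' : π ^ α ≠ 0 := hπα.ne'
    have hn' : (n:ℝ) ≠ 0 := hnpos.ne'
    rw [hK, Real.rpow_add (show (0:ℝ) < y / π by positivity) 1 α, Real.rpow_one,
      Real.div_rpow hy0.le hπ.le, hyα]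
    field_simp
  rw [hkey, hmap]
  apply mul_le_mul_of_nonneg_left _ hnpos.le
  exact hval_ge.trans (hIval ▸ hIset)
end

section
/- For every α ∈ (0,2) there is a constant C > 0 such that for all z ∈ ℝ and all k ≥ 1, | ∫_ℝ (1−cos(zu))·cos(ku)·|u|^{−1−α} du | ≤ C·z²·k^{α−2}. In particular, with k = n^{1/α}, the bound is C·z²·n^{−(2−α)/α}. -/
open MeasureTheory Real Set

noncomputable def kern (α a : ℝ) (u : ℝ) : ℝ := (1 - Real.cos (a * u)) / |u| ^ (1 + α)

lemma kern_meas (α a : ℝ) : Measurable (kern α a) := by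
  unfold kern; fun_prop

lemma kern_nonneg (α a u : ℝ) : 0 ≤ kern α a u := by
  unfold kern
  exact div_nonneg (by nlinarith [Real.cos_le_one (a * u)]) (Real.rpow_nonneg (abs_nonneg u) _)

lemma integrableOn_kern_Ioi {α : ℝ} (h0 : 0 < α) (h2 : α < 2) (a : ℝ) :
    IntegrableOn (kern α a) (Ioi 0) := by
  have hmeas : AEStronglyMeasurable (kern α a) volume := (kern_meas α a).aestronglyMeasurable
  rw [← Ioc_union_Ioi_eq_Ioi (zero_le_one (α := ℝ)), integrableOn_union]
  constructor
  · have hint : IntegrableOn (fun u : ℝ => a ^ 2 * u ^ (1 - α)) (Ioc 0 1) := by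
      apply Integrable.const_mul
      have h := intervalIntegral.intervalIntegrable_rpow' (a := 0) (b := 1)
        (by linarith : (-1 : ℝ) < 1 - α)
      rwa [intervalIntegrable_iff_integrableOn_Ioc_of_le zero_le_one] at h
    apply Integrable.mono hint hmeas.restrict
    filter_upwards [ae_restrict_mem measurableSet_Ioc] with u hu
    have hu0 : 0 < u := hu.1
    have habs : |u| = u := abs_of_pos hu0
    have hpow : (0:ℝ) < u ^ (1 + α) := Real.rpow_pos_of_pos hu0 _
    have hcos : 1 - Real.cos (a * u) ≤ a ^ 2 * u ^ 2 := by
      nlinarith [Real.one_sub_sq_div_two_le_cos (x := a * u), sq_nonneg (a * u)]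
    have hnn : 0 ≤ kern α a u := kern_nonneg α a u
    rw [Real.norm_eq_abs, Real.norm_eq_abs, abs_of_nonneg hnn]
    have hb : 0 ≤ a ^ 2 * u ^ (1 - α) := by positivity
    rw [abs_of_nonneg hb]
    unfold kern
    rw [habs, div_le_iff₀ hpow]
    calc 1 - Real.cos (a * u) ≤ a ^ 2 * u ^ 2 := hcos
      _ = a ^ 2 * u ^ (1 - α) * u ^ (1 + α) := by
          rw [mul_assoc, ← Real.rpow_add hu0]
          norm_num
  · have hint : IntegrableOn (fun u : ℝ => 2 * u ^ (-(1 + α))) (Ioi 1) :=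
      (integrableOn_Ioi_rpow_of_lt (by linarith) one_pos).const_mul 2
    apply Integrable.mono hint hmeas.restrict
    filter_upwards [ae_restrict_mem measurableSet_Ioi] with u hu
    have hu0 : (0:ℝ) < u := lt_trans one_pos hu
    have habs : |u| = u := abs_of_pos hu0
    have hpow : (0:ℝ) < u ^ (1 + α) := Real.rpow_pos_of_pos hu0 _
    have hnn : 0 ≤ kern α a u := kern_nonneg α a u
    rw [Real.norm_eq_abs, Real.norm_eq_abs, abs_of_nonneg hnn]
    have hb : 0 ≤ 2 * u ^ (-(1 + α)) := by positivity
    rw [abs_of_nonneg hb]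
    unfold kern
    rw [habs, Real.rpow_neg hu0.le, div_le_iff₀ hpow, mul_assoc,
      inv_mul_cancel₀ (ne_of_gt hpow), mul_one]
    nlinarith [Real.neg_one_le_cos (a * u)]

lemma integrable_kern {α : ℝ} (h0 : 0 < α) (h2 : α < 2) (a : ℝ) :
    Integrable (kern α a) := by
  rw [← integrableOn_univ, ← @Iio_union_Ici _ _ (0 : ℝ), integrableOn_union,
    integrableOn_Ici_iff_integrableOn_Ioi]
  refine ⟨?_, integrableOn_kern_Ioi h0 h2 a⟩
  rw [← (Measure.measurePreserving_neg (volume : Measure ℝ)).integrableOn_comp_preimage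
      (Homeomorph.neg ℝ).measurableEmbedding]
  have heq : kern α a ∘ (Neg.neg : ℝ → ℝ) = kern α a := by
    funext u
    simp only [Function.comp_apply, kern, mul_neg, Real.cos_neg, abs_neg]
  rw [heq]
  simpa using integrableOn_kern_Ioi h0 h2 a

lemma integral_kern_eq {α : ℝ} (h0 : 0 < α) (a : ℝ) :
    ∫ u, kern α a u = |a| ^ α * ∫ u, kern α 1 u := by
  rcases eq_or_ne a 0 with rfl | ha
  · rw [abs_zero, Real.zero_rpow (ne_of_gt h0), zero_mul]
    simp [kern]
  · have hA : (0:ℝ) < |a| := abs_pos.mpr ha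
    have key : ∀ u : ℝ, kern α a u = |a| ^ (1 + α) * kern α 1 (a * u) := by
      intro u
      rcases eq_or_ne u 0 with rfl | hu
      · simp [kern]
      · unfold kern
        rw [one_mul, abs_mul, Real.mul_rpow (abs_nonneg a) (abs_nonneg u)]
        have h1 : |a| ^ (1 + α) ≠ 0 := ne_of_gt (Real.rpow_pos_of_pos hA _)
        field_simp
    calc ∫ u, kern α a u = ∫ u, |a| ^ (1 + α) * kern α 1 (a * u) := by simp_rw [key]
      _ = |a| ^ (1 + α) * ∫ u, kern α 1 (a * u) := integral_const_mul _ _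
      _ = |a| ^ (1 + α) * (|a⁻¹| • ∫ u, kern α 1 u) := by
          rw [Measure.integral_comp_mul_left (kern α 1) a]
      _ = |a| ^ α * ∫ u, kern α 1 u := by
          rw [smul_eq_mul, abs_inv, Real.rpow_add hA, Real.rpow_one]
          field_simp

lemma integral_main {α : ℝ} (h0 : 0 < α) (h2 : α < 2) (z k : ℝ) :
    ∫ u : ℝ, (1 - Real.cos (z * u)) * Real.cos (k * u) / |u| ^ (1 + α)
      = (|z + k| ^ α / 2 + |z - k| ^ α / 2 - |k| ^ α) * ∫ u, kern α 1 u := by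
  have hpt : ∀ u : ℝ, (1 - Real.cos (z * u)) * Real.cos (k * u) / |u| ^ (1 + α)
      = kern α (z + k) u / 2 + kern α (z - k) u / 2 - kern α k u := by
    intro u
    unfold kern
    have trig : (1 - Real.cos (z * u)) * Real.cos (k * u)
        = (1 - Real.cos ((z + k) * u)) / 2 + (1 - Real.cos ((z - k) * u)) / 2
          - (1 - Real.cos (k * u)) := by
      have e1 : (z + k) * u = z * u + k * u := by ring
      have e2 : (z - k) * u = z * u - k * u := by ring
      rw [e1, e2, Real.cos_add, Real.cos_sub]
      ring
    rw [trig]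
    ring
  simp_rw [hpt]
  have ha : Integrable (fun u : ℝ => kern α (z + k) u / 2) volume :=
    (integrable_kern h0 h2 (z + k)).div_const 2
  have hb : Integrable (fun u : ℝ => kern α (z - k) u / 2) volume :=
    (integrable_kern h0 h2 (z - k)).div_const 2
  have hab : Integrable (fun u : ℝ => kern α (z + k) u / 2 + kern α (z - k) u / 2) volume :=
    ha.add hb
  rw [integral_sub hab (integrable_kern h0 h2 k), integral_add ha hb,
    integral_div, integral_div, integral_kern_eq h0 (z + k), integral_kern_eq h0 (z - k),
    integral_kern_eq h0 k]
  ring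

lemma hhalf_bound {α k : ℝ} (h0 : 0 < α) (_h2 : α < 2) (hk0 : 0 < k) :
    (k / 2) ^ (α - 2) ≤ 4 * k ^ (α - 2) := by
  rw [Real.div_rpow hk0.le (by norm_num : (0:ℝ) ≤ 2)]
  have h1 : (2:ℝ) ^ (-2 : ℝ) ≤ 2 ^ (α - 2) :=
    Real.rpow_le_rpow_of_exponent_le one_le_two (by linarith)
  have h2' : (2:ℝ) ^ (-2 : ℝ) = 1 / 4 := by
    rw [Real.rpow_neg (by norm_num : (0:ℝ) ≤ 2), Real.rpow_two]
    norm_num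
  rw [h2'] at h1
  have hpos : (0:ℝ) < 2 ^ (α - 2) := Real.rpow_pos_of_pos (by norm_num) _
  rw [div_le_iff₀ hpos]
  have hkn : (0:ℝ) ≤ 4 * k ^ (α - 2) := by
    have := Real.rpow_nonneg hk0.le (α - 2); linarith
  have key := mul_le_mul_of_nonneg_left h1 hkn
  linarith

lemma secdiff_core {α : ℝ} (h0 : 0 < α) (h2 : α < 2) (w k : ℝ) (hk : 1 ≤ k) (hw0 : 0 ≤ w) :
    |(k + w) ^ α / 2 + |k - w| ^ α / 2 - k ^ α| ≤ 60 * w ^ 2 * k ^ (α - 2) := by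
  have hk0 : (0:ℝ) < k := lt_of_lt_of_le one_pos hk
  have hhalf := hhalf_bound (α := α) h0 h2 hk0
  rcases le_or_gt w (k / 2) with hcase | hcase
  · -- small w : mean value theorem, two applications
    have hkw : |k - w| = k - w := abs_of_nonneg (by linarith)
    rw [hkw]
    have inner : ∀ t ∈ Icc (0:ℝ) w, |(k + t) ^ (α - 1) - (k - t) ^ (α - 1)|
        ≤ |α - 1| * (k / 2) ^ (α - 2) * (2 * w) := by
      intro t ht
      obtain ⟨ht0, htw⟩ := ht
      have h1 : ∀ s ∈ Icc (k / 2) (k + w), HasDerivWithinAt (fun s : ℝ => s ^ (α - 1))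
          ((α - 1) * s ^ (α - 2)) (Icc (k / 2) (k + w)) s := by
        intro s hs
        have hs0 : s ≠ 0 := ne_of_gt (lt_of_lt_of_le (by linarith) hs.1)
        have h := Real.hasDerivAt_rpow_const (x := s) (p := α - 1) (Or.inl hs0)
        have e : α - 1 - 1 = α - 2 := by ring
        rw [e] at h
        exact h.hasDerivWithinAt
      have hbd : ∀ s ∈ Icc (k / 2) (k + w), ‖(α - 1) * s ^ (α - 2)‖
          ≤ |α - 1| * (k / 2) ^ (α - 2) := by
        intro s hs
        rw [Real.norm_eq_abs, abs_mul]
        have hs0 : (0:ℝ) < k / 2 := by linarith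
        have hle : s ^ (α - 2) ≤ (k / 2) ^ (α - 2) :=
          Real.rpow_le_rpow_of_nonpos hs0 hs.1 (by linarith)
        rw [abs_of_nonneg (Real.rpow_nonneg (le_trans hs0.le hs.1) _)]
        exact mul_le_mul_of_nonneg_left hle (abs_nonneg _)
      have hmem1 : k + t ∈ Icc (k / 2) (k + w) := ⟨by linarith, by linarith⟩
      have hmem2 : k - t ∈ Icc (k / 2) (k + w) := ⟨by linarith, by linarith⟩
      have hmvt := Convex.norm_image_sub_le_of_norm_hasDerivWithin_le h1 hbd
        (convex_Icc _ _) hmem2 hmem1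
      rw [Real.norm_eq_abs, Real.norm_eq_abs] at hmvt
      have he : k + t - (k - t) = 2 * t := by ring
      rw [he] at hmvt
      calc |(k + t) ^ (α - 1) - (k - t) ^ (α - 1)|
          ≤ |α - 1| * (k / 2) ^ (α - 2) * |2 * t| := hmvt
        _ ≤ |α - 1| * (k / 2) ^ (α - 2) * (2 * w) := by
            apply mul_le_mul_of_nonneg_left _
              (mul_nonneg (abs_nonneg _) (Real.rpow_nonneg (by linarith) _))
            rw [abs_of_nonneg (by linarith)]
            linarith
    have hG : ∀ t ∈ Icc (0:ℝ) w, HasDerivWithinAt (fun t : ℝ => (k + t) ^ α + (k - t) ^ α)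
        (1 * α * (k + t) ^ (α - 1) + -1 * α * (k - t) ^ (α - 1)) (Icc 0 w) t := by
      intro t ht
      have hp1 : k + t ≠ 0 := ne_of_gt (by linarith [ht.1])
      have hp2 : k - t ≠ 0 := ne_of_gt (by linarith [ht.2])
      exact ((((hasDerivAt_id t).const_add k).rpow_const (Or.inl hp1)).add
        (((hasDerivAt_id t).const_sub k).rpow_const (Or.inl hp2))).hasDerivWithinAt
    have hGbd : ∀ t ∈ Icc (0:ℝ) w, ‖1 * α * (k + t) ^ (α - 1) + -1 * α * (k - t) ^ (α - 1)‖
        ≤ α * (|α - 1| * (k / 2) ^ (α - 2) * (2 * w)) := by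
      intro t ht
      have e : 1 * α * (k + t) ^ (α - 1) + -1 * α * (k - t) ^ (α - 1)
          = α * ((k + t) ^ (α - 1) - (k - t) ^ (α - 1)) := by ring
      rw [e, Real.norm_eq_abs, abs_mul, abs_of_nonneg h0.le]
      exact mul_le_mul_of_nonneg_left (inner t ht) h0.le
    have hfin := Convex.norm_image_sub_le_of_norm_hasDerivWithin_le hG hGbd (convex_Icc _ _)
      (left_mem_Icc.mpr hw0) (right_mem_Icc.mpr hw0)
    simp only [add_zero, sub_zero, Real.norm_eq_abs] at hfin
    rw [abs_of_nonneg hw0] at hfin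
    have e2 : (k + w) ^ α / 2 + (k - w) ^ α / 2 - k ^ α
        = ((k + w) ^ α + (k - w) ^ α - (k ^ α + k ^ α)) / 2 := by ring
    rw [e2, abs_div, abs_two]
    have habs1 : |α - 1| ≤ 1 := abs_le.mpr ⟨by linarith, by linarith⟩
    calc |(k + w) ^ α + (k - w) ^ α - (k ^ α + k ^ α)| / 2
        ≤ α * (|α - 1| * (k / 2) ^ (α - 2) * (2 * w)) * w / 2 := by linarith
      _ = α * |α - 1| * (k / 2) ^ (α - 2) * w ^ 2 := by ring
      _ ≤ 2 * 1 * (4 * k ^ (α - 2)) * w ^ 2 := by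
          have hn1 : (0:ℝ) ≤ (k / 2) ^ (α - 2) := Real.rpow_nonneg (by linarith) _
          have ha2 : α * |α - 1| ≤ 2 := by
            nlinarith [mul_nonneg h0.le (sub_nonneg.mpr habs1)]
          have s1 : α * |α - 1| * (k / 2) ^ (α - 2) ≤ 2 * (4 * k ^ (α - 2)) := by
            calc α * |α - 1| * (k / 2) ^ (α - 2) ≤ 2 * (k / 2) ^ (α - 2) :=
                  mul_le_mul_of_nonneg_right ha2 hn1
              _ ≤ 2 * (4 * k ^ (α - 2)) := by linarith
          calc α * |α - 1| * (k / 2) ^ (α - 2) * w ^ 2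
              ≤ 2 * (4 * k ^ (α - 2)) * w ^ 2 := mul_le_mul_of_nonneg_right s1 (sq_nonneg w)
            _ = 2 * 1 * (4 * k ^ (α - 2)) * w ^ 2 := by ring
      _ ≤ 60 * w ^ 2 * k ^ (α - 2) := by
          nlinarith [mul_nonneg (Real.rpow_nonneg hk0.le (α - 2)) (sq_nonneg w)]
  · -- large w : crude bound
    have hwpos : (0:ℝ) < w := lt_of_le_of_lt (by linarith) hcase
    have t1 : (k + w) ^ α ≤ 9 * w ^ α := by
      calc (k + w) ^ α ≤ (3 * w) ^ α := Real.rpow_le_rpow (by linarith) (by linarith) h0.le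
        _ = 3 ^ α * w ^ α := Real.mul_rpow (by norm_num) hw0
        _ ≤ 9 * w ^ α := by
            have h3 : (3:ℝ) ^ α ≤ 3 ^ (2:ℝ) :=
              Real.rpow_le_rpow_of_exponent_le (by norm_num) h2.le
            have h9 : (3:ℝ) ^ (2:ℝ) = 9 := by rw [Real.rpow_two]; norm_num
            nlinarith [Real.rpow_nonneg hw0 α]
    have t2 : |k - w| ^ α ≤ 9 * w ^ α := by
      have hle : |k - w| ≤ 3 * w := abs_le.mpr ⟨by linarith, by linarith⟩
      calc |k - w| ^ α ≤ (3 * w) ^ α := Real.rpow_le_rpow (abs_nonneg _) hle h0.le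
        _ = 3 ^ α * w ^ α := Real.mul_rpow (by norm_num) hw0
        _ ≤ 9 * w ^ α := by
            have h3 : (3:ℝ) ^ α ≤ 3 ^ (2:ℝ) :=
              Real.rpow_le_rpow_of_exponent_le (by norm_num) h2.le
            have h9 : (3:ℝ) ^ (2:ℝ) = 9 := by rw [Real.rpow_two]; norm_num
            nlinarith [Real.rpow_nonneg hw0 α]
    have t3 : k ^ α ≤ 4 * w ^ α := by
      calc k ^ α ≤ (2 * w) ^ α := Real.rpow_le_rpow hk0.le (by linarith) h0.le
        _ = 2 ^ α * w ^ α := Real.mul_rpow (by norm_num) hw0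
        _ ≤ 4 * w ^ α := by
            have h3 : (2:ℝ) ^ α ≤ 2 ^ (2:ℝ) :=
              Real.rpow_le_rpow_of_exponent_le one_le_two h2.le
            have h4 : (2:ℝ) ^ (2:ℝ) = 4 := by rw [Real.rpow_two]; norm_num
            nlinarith [Real.rpow_nonneg hw0 α]
    have tri : |(k + w) ^ α / 2 + |k - w| ^ α / 2 - k ^ α| ≤ 13 * w ^ α := by
      have nA : 0 ≤ (k + w) ^ α := Real.rpow_nonneg (by linarith) α
      have nB : 0 ≤ |k - w| ^ α := Real.rpow_nonneg (abs_nonneg _) α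
      have nC : 0 ≤ k ^ α := Real.rpow_nonneg hk0.le α
      apply abs_le.mpr
      constructor <;> nlinarith
    have tw : w ^ α ≤ 4 * (w ^ 2 * k ^ (α - 2)) := by
      have e : w ^ α = w ^ 2 * w ^ (α - 2) := by
        rw [← Real.rpow_two, ← Real.rpow_add hwpos]
        norm_num
      rw [e]
      have hle1 : w ^ (α - 2) ≤ (k / 2) ^ (α - 2) :=
        Real.rpow_le_rpow_of_nonpos (by linarith) hcase.le (by linarith)
      nlinarith [sq_nonneg w, Real.rpow_nonneg hk0.le (α - 2),
        mul_nonneg (sq_nonneg w) (Real.rpow_nonneg (show (0:ℝ) ≤ k/2 by linarith) (α - 2))]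
    calc |(k + w) ^ α / 2 + |k - w| ^ α / 2 - k ^ α| ≤ 13 * w ^ α := tri
      _ ≤ 13 * (4 * (w ^ 2 * k ^ (α - 2))) := by linarith
      _ ≤ 60 * w ^ 2 * k ^ (α - 2) := by
          nlinarith [mul_nonneg (sq_nonneg w) (Real.rpow_nonneg hk0.le (α - 2))]


lemma secdiff_bound {α : ℝ} (h0 : 0 < α) (h2 : α < 2) (z k : ℝ) (hk : 1 ≤ k) :
    |(|z + k| ^ α / 2 + |z - k| ^ α / 2 - |k| ^ α)| ≤ 60 * z ^ 2 * k ^ (α - 2) := by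
  have hk0 : (0:ℝ) < k := lt_of_lt_of_le one_pos hk
  have habsk : |k| = k := abs_of_pos hk0
  set w : ℝ := |z| with hw
  have hw0 : 0 ≤ w := abs_nonneg z
  have hz2 : z ^ 2 = w ^ 2 := (sq_abs z).symm
  have hcore := secdiff_core h0 h2 w k hk hw0
  rcases le_or_gt 0 z with hz | hz
  · have e1 : |z + k| = k + w := by
      rw [abs_of_nonneg (by linarith), hw, abs_of_nonneg hz]; ring
    have e2 : |z - k| = |k - w| := by
      rw [abs_sub_comm, hw, abs_of_nonneg hz]
    rw [e1, e2, habsk, hz2]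
    exact hcore
  · have hwz : w = -z := by rw [hw, abs_of_neg hz]
    have e1 : |z + k| = |k - w| := by rw [hwz]; congr 1; ring
    have e2 : |z - k| = k + w := by
      rw [show z - k = -(k + -z) by ring, abs_neg, hwz, abs_of_nonneg (by linarith)]
    rw [e1, e2, habsk, hz2]
    calc |(|k - w| ^ α / 2 + (k + w) ^ α / 2 - k ^ α)|
        = |((k + w) ^ α / 2 + |k - w| ^ α / 2 - k ^ α)| := by ring_nf
      _ ≤ 60 * w ^ 2 * k ^ (α - 2) := hcore

/-- For every `α ∈ (0,2)` there is `C > 0` such that for all real `z` and `k ≥ 1`,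
`|∫ (1−cos(zu)) cos(ku) |u|^{−1−α} du| ≤ C z² k^{α−2}`; in particular with `k = n^{1/α}`
the bound is `C z² n^{−(2−α)/α}`. -/
theorem cos_perturbation_bound (α : ℝ) (hα : α ∈ Set.Ioo (0 : ℝ) 2) :
    ∃ C > 0,
      (∀ z k : ℝ, 1 ≤ k →
        |∫ u : ℝ, (1 - Real.cos (z * u)) * Real.cos (k * u) / |u| ^ (1 + α)| ≤
          C * z ^ 2 * k ^ (α - 2)) ∧
      ∀ (z : ℝ) (n : ℕ), 1 ≤ n →
        |∫ u : ℝ, (1 - Real.cos (z * u)) * Real.cos ((n : ℝ) ^ (1 / α) * u) / |u| ^ (1 + α)| ≤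
          C * z ^ 2 * (n : ℝ) ^ (-(2 - α) / α) := by
  obtain ⟨h0, h2⟩ := hα
  have hc0 : 0 ≤ ∫ u, kern α 1 u := integral_nonneg fun u => kern_nonneg α 1 u
  set c : ℝ := ∫ u, kern α 1 u with hc
  have hpart1 : ∀ z k : ℝ, 1 ≤ k →
      |∫ u : ℝ, (1 - Real.cos (z * u)) * Real.cos (k * u) / |u| ^ (1 + α)| ≤
        (60 * c + 1) * z ^ 2 * k ^ (α - 2) := by
    intro z k hk
    have hk0 : (0:ℝ) < k := lt_of_lt_of_le one_pos hk
    rw [integral_main h0 h2 z k, abs_mul, abs_of_nonneg hc0]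
    have h1 := secdiff_bound h0 h2 z k hk
    have hzk : 0 ≤ z ^ 2 * k ^ (α - 2) :=
      mul_nonneg (sq_nonneg z) (Real.rpow_nonneg hk0.le _)
    calc |(|z + k| ^ α / 2 + |z - k| ^ α / 2 - |k| ^ α)| * c
        ≤ 60 * z ^ 2 * k ^ (α - 2) * c := mul_le_mul_of_nonneg_right h1 hc0
      _ = 60 * c * (z ^ 2 * k ^ (α - 2)) := by ring
      _ ≤ (60 * c + 1) * (z ^ 2 * k ^ (α - 2)) := by nlinarith
      _ = (60 * c + 1) * z ^ 2 * k ^ (α - 2) := by ring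
  refine ⟨60 * c + 1, by positivity, hpart1, ?_⟩
  intro z n hn
  have hn1 : (1:ℝ) ≤ (n:ℝ) := by exact_mod_cast hn
  have hk : (1:ℝ) ≤ (n:ℝ) ^ (1 / α) := by
    have h := Real.rpow_le_rpow zero_le_one hn1 (le_of_lt (by positivity : (0:ℝ) < 1 / α))
    rwa [Real.one_rpow] at h
  have h := hpart1 z ((n:ℝ) ^ (1 / α)) hk
  have he : ((n:ℝ) ^ (1 / α)) ^ (α - 2) = (n:ℝ) ^ (-(2 - α) / α) := by
    rw [← Real.rpow_mul (Nat.cast_nonneg n)]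
    congr 1
    field_simp
    ring
  rwa [he] at h
end

section
/- Let ψ(z) := ∫_ℝ (1−cos(uz)) / (2u·sinh u) du. Then ψ is well-defined and finite for every z ∈ ℝ, and there exists c > 0 such that ψ(z) ≥ c·|z| for all |z| ≥ 1. -/
open MeasureTheory Real Set

lemma my_sinh_le_mul_exp {x : ℝ} (hx : 0 ≤ x) : Real.sinh x ≤ x * Real.exp x := by
  rw [Real.sinh_eq]
  have h1 := Real.add_one_le_exp (-(2*x))
  have h2 := (Real.exp_pos x).le
  have h4 : Real.exp (-(2*x)) * Real.exp x = Real.exp (-x) := by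
    rw [← Real.exp_add]; ring_nf
  have h3 : Real.exp (-x) * Real.exp x = 1 := by rw [← Real.exp_add]; simp
  nlinarith [mul_le_mul_of_nonneg_right h1 h2, Real.exp_pos (-x)]

lemma my_sq_le_mul_sinh (u : ℝ) : u^2 ≤ u * Real.sinh u := by
  rcases le_or_gt 0 u with h | h
  · nlinarith [(Real.self_le_sinh_iff (x := u)).2 h]
  · nlinarith [(Real.sinh_le_self_iff (x := u)).2 h.le]

lemma my_nonneg (z u : ℝ) : 0 ≤ (1 - Real.cos (u * z)) / (2 * u * Real.sinh u) := by
  apply div_nonneg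
  · linarith [Real.cos_le_one (u * z)]
  · nlinarith [my_sq_le_mul_sinh u, sq_nonneg u]

lemma my_global_bound (z u : ℝ) :
    (1 - Real.cos (u * z)) / (2 * u * Real.sinh u) ≤ z^2 / 4 := by
  rcases eq_or_ne u 0 with rfl | hu
  · simp; positivity
  · have hD : 0 < 2 * u * Real.sinh u := by
      rcases lt_or_gt_of_ne hu with h | h
      · have := Real.sinh_neg_iff.2 h; nlinarith
      · have := Real.sinh_pos_iff.2 h; nlinarith
    rw [div_le_iff₀ hD]
    have h1 : 1 - Real.cos (u*z) ≤ (u*z)^2/2 := by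
      linarith [Real.one_sub_sq_div_two_le_cos (x := u*z)]
    have h2 := my_sq_le_mul_sinh u
    nlinarith [sq_nonneg z, sq_nonneg (u*z), mul_le_mul_of_nonneg_left h2 (sq_nonneg z)]

lemma my_meas (z : ℝ) :
    AEStronglyMeasurable (fun u : ℝ => (1 - Real.cos (u * z)) / (2 * u * Real.sinh u)) volume := by
  apply Measurable.aestronglyMeasurable
  exact (measurable_const.sub ((measurable_id.mul_const z).cos)).div
    ((measurable_const.mul measurable_id).mul Real.measurable_sinh)

lemma my_tail_bound (z u : ℝ) (hu : 1 ≤ u) :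
    (1 - Real.cos (u * z)) / (2 * u * Real.sinh u) ≤ 4 * Real.exp (-u) := by
  have hexp : 2 ≤ Real.exp u := le_trans (by nlinarith [Real.exp_one_gt_d9]) (Real.exp_le_exp.2 hu)
  have hsinh : Real.exp u / 2 ≤ 2 * u * Real.sinh u := by
    rw [Real.sinh_eq]
    have h2 : Real.exp (-u) ≤ 1 := Real.exp_le_one_iff.2 (by linarith)
    nlinarith [Real.exp_pos u, Real.exp_pos (-u)]
  calc (1 - Real.cos (u * z)) / (2 * u * Real.sinh u)
      ≤ 2 / (Real.exp u / 2) := by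
        apply div_le_div₀ (by norm_num) _ (by positivity) hsinh
        linarith [Real.neg_one_le_cos (u * z)]
    _ = 4 * Real.exp (-u) := by
        rw [Real.exp_neg]; field_simp; ring

lemma my_integrable (z : ℝ) :
    Integrable (fun u : ℝ => (1 - Real.cos (u * z)) / (2 * u * Real.sinh u)) := by
  set g : ℝ → ℝ := fun u => (1 - Real.cos (u * z)) / (2 * u * Real.sinh u) with hg
  have hmeas := my_meas z
  have hIoi : IntegrableOn g (Ioi 1) := by
    have hdom : Integrable (fun x : ℝ => 4 * Real.exp (-1 * x)) (volume.restrict (Ioi 1)) :=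
      (exp_neg_integrableOn_Ioi 1 one_pos).const_mul 4
    refine hdom.mono hmeas.restrict ?_
    rw [ae_restrict_iff' measurableSet_Ioi]
    filter_upwards with x hx
    rw [Real.norm_eq_abs, Real.norm_eq_abs, abs_of_nonneg (my_nonneg z x),
      abs_of_nonneg (by positivity)]
    simpa [neg_mul] using my_tail_bound z x hx.le
  have hIio : IntegrableOn g (Iio (-1)) := by
    rw [IntegrableOn, ← Measure.map_neg_eq_self (volume : Measure ℝ)]
    have m : MeasurableEmbedding fun x : ℝ => -x := (Homeomorph.neg ℝ).measurableEmbedding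
    rw [m.restrict_map, m.integrable_map_iff]
    have : (fun x : ℝ => -x) ⁻¹' (Iio (-1)) = Ioi 1 := by
      ext x; simp [lt_neg]
    rw [this]
    have : g ∘ (fun x : ℝ => -x) = g := by
      ext x; simp only [Function.comp_apply, hg, neg_mul, Real.cos_neg, Real.sinh_neg]
      ring_nf
    rwa [this]
  have hIcc : IntegrableOn g (Icc (-1) 1) := by
    have hdom : Integrable (fun _ : ℝ => z^2/4) (volume.restrict (Icc (-1:ℝ) 1)) := by
      exact integrableOn_const measure_Icc_lt_top.ne
    refine hdom.mono hmeas.restrict ?_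
    filter_upwards with x
    rw [Real.norm_eq_abs, Real.norm_eq_abs, abs_of_nonneg (my_nonneg z x),
      abs_of_nonneg (by positivity)]
    exact my_global_bound z x
  have hunion : Iio (-1:ℝ) ∪ (Icc (-1:ℝ) 1 ∪ Ioi 1) = univ := by
    ext x; simp only [mem_union, mem_Iio, mem_Icc, mem_Ioi, mem_univ, iff_true]
    by_cases h : x < -1
    · exact Or.inl h
    · by_cases h2 : x ≤ 1
      · exact Or.inr (Or.inl ⟨by linarith, h2⟩)
      · exact Or.inr (Or.inr (by linarith))
  rw [← integrableOn_univ, ← hunion]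
  exact hIio.union (hIcc.union hIoi)

lemma my_cos_half_lt_one : Real.cos (1/2) < 1 := by
  have h := Real.cos_le_one_sub_mul_cos_sq (x := 1/2) (by
    rw [abs_of_nonneg (by norm_num)]; linarith [Real.pi_gt_three])
  have h2 : (0:ℝ) < 2 / π ^ 2 * (1 / 2) ^ 2 := by positivity
  linarith

lemma my_lower (z : ℝ) (hz : 1 ≤ |z|) :
    (1 - Real.cos (1/2)) / (4 * Real.exp 1) * |z| ≤
      ∫ u : ℝ, (1 - Real.cos (u * z)) / (2 * u * Real.sinh u) := by
  set g : ℝ → ℝ := fun u => (1 - Real.cos (u * z)) / (2 * u * Real.sinh u) with hg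
  set w := |z| with hwdef
  have hw0 : 0 < w := lt_of_lt_of_le one_pos hz
  set C : ℝ := (1 - Real.cos (1/2)) * w^2 / (2 * Real.exp 1) with hC
  have hSmeas : MeasurableSet (Icc (1/(2*w)) (1/w)) := measurableSet_Icc
  have hbound : ∀ u ∈ Icc (1/(2*w)) (1/w), C ≤ g u := by
    intro u hu
    obtain ⟨hu1, hu2⟩ := hu
    have hu0 : 0 < u := lt_of_lt_of_le (by positivity) hu1
    have huw1 : 1/2 ≤ u * w := by
      have h := hu1
      rw [div_le_iff₀ (by positivity : (0:ℝ) < 2 * w)] at h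
      nlinarith
    have huw2 : u * w ≤ 1 := by
      have h := hu2
      rw [le_div_iff₀ hw0] at h
      exact h
    have hcos : Real.cos (u * z) = Real.cos (u * w) := by
      rw [← Real.cos_abs (u * z), abs_mul, abs_of_pos hu0, hwdef]
    have hnum : 1 - Real.cos (1/2) ≤ 1 - Real.cos (u * z) := by
      rw [hcos]
      have := Real.cos_le_cos_of_nonneg_of_le_pi (x := 1/2) (y := u * w)
        (by norm_num) (by linarith [Real.pi_gt_three]) huw1
      linarith
    have hD0 : 0 < 2 * u * Real.sinh u := by
      have := Real.sinh_pos_iff.2 hu0; positivity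
    have hu_le_one : u ≤ 1 := by
      calc u ≤ 1/w := hu2
        _ ≤ 1 := by rw [div_le_one hw0]; exact hz
    have hDle : 2 * u * Real.sinh u ≤ 2 * Real.exp 1 / w^2 := by
      have h1 : Real.sinh u ≤ u * Real.exp u := my_sinh_le_mul_exp hu0.le
      have h2 : Real.exp u ≤ Real.exp 1 := Real.exp_le_exp.2 hu_le_one
      have h3 : u ≤ 1/w := hu2
      have h4 : u^2 ≤ 1/w^2 := by
        rw [div_eq_mul_inv, one_mul, ← inv_pow]
        exact pow_le_pow_left₀ hu0.le (by rw [← one_div]; exact h3) 2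
      have h5 : u^2 * Real.exp u ≤ (1/w^2) * Real.exp 1 :=
        mul_le_mul h4 h2 (Real.exp_pos u).le (by positivity)
      calc 2 * u * Real.sinh u ≤ 2 * u * (u * Real.exp u) := by nlinarith
        _ = 2 * (u^2 * Real.exp u) := by ring
        _ ≤ 2 * ((1/w^2) * Real.exp 1) := by linarith
        _ = 2 * Real.exp 1 / w^2 := by ring
    have : C = (1 - Real.cos (1/2)) / (2 * Real.exp 1 / w^2) := by
      rw [hC]; field_simp
    rw [this, hg]
    exact div_le_div₀ (by linarith [my_nonneg z u, Real.cos_le_one (u*z)]) hnum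
      (by positivity) hDle
  have hvol : (volume (Icc (1/(2*w)) (1/w))).toReal = 1/(2*w) := by
    rw [Real.volume_Icc, ENNReal.toReal_ofReal (by rw [sub_nonneg]; gcongr <;> linarith)]
    field_simp; ring
  have hstep1 := setIntegral_ge_of_const_le_real hSmeas measure_Icc_lt_top.ne hbound
    (my_integrable z).integrableOn
  rw [measureReal_def, hvol] at hstep1
  have hstep2 : (∫ u in Icc (1/(2*w)) (1/w), g u) ≤ ∫ u, g u :=
    setIntegral_le_integral (my_integrable z) (Filter.Eventually.of_forall (my_nonneg z))
  have heq : (1 - Real.cos (1/2)) / (4 * Real.exp 1) * w = C * (1/(2*w)) := by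
    rw [hC]; field_simp; ring
  calc (1 - Real.cos (1/2)) / (4 * Real.exp 1) * w = C * (1/(2*w)) := heq
    _ ≤ _ := le_trans hstep1 hstep2


/-- Condition (B) for Example 2: `ψ(z) = ∫_ℝ (1−cos(uz))/(2u sinh u) du` is well defined
(the integrand is integrable) for every `z`, and `ψ(z) ≥ c|z|` for `|z| ≥ 1`, some `c > 0`. -/
theorem example_two_condition_B :
    (∀ z : ℝ, Integrable (fun u : ℝ => (1 - Real.cos (u * z)) / (2 * u * Real.sinh u))) ∧
    ∃ c > 0, ∀ z : ℝ, 1 ≤ |z| →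
      c * |z| ≤ ∫ u : ℝ, (1 - Real.cos (u * z)) / (2 * u * Real.sinh u) := by
  refine ⟨my_integrable, (1 - Real.cos (1/2)) / (4 * Real.exp 1), ?_, my_lower⟩
  have := my_cos_half_lt_one
  have h2 : (0:ℝ) < 1 - Real.cos (1/2) := by linarith
  positivity
end
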